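/- arXiv:1203.0515 — 10 statements merged into one kernel-verified Lean document; each statement's English description precedes it below -/
import Mathlib

section
/- Let X be a densely defined closable operator on a Hilbert space H with domain D, and let S = (I + X̄X*)⁻¹ restricted to D (where X̄ denotes the closure of X and X* its adjoint). Then the range S(D) is dense in H. -/
local notation "⟪" x ", " y "⟫" => @inner ℂ _ _ x y

/-- If `X` is a densely defined closable operator with domain `D` and
`S = (I + X̄X*)⁻¹ ↾ D` (characterized by `(I + X̄X*)(Sη) = η`), then `S(D)` is dense in `H`. -/
theorem stmt_1 {H : Type*} [NormedAddCommGroup H] [InnerProductSpace ℂ H] [CompleteSpace H]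
    (D : Submodule ℂ H) (hD : Dense (D : Set H))
    (X : H →ₗ.[ℂ] H) (hdom : X.domain = D) (hcl : X.IsClosable)
    (S : H →L[ℂ] H)
    (hS : ∀ η : H, ∃ (h₁ : S η ∈ X.adjoint.domain)
        (h₂ : X.adjoint ⟨S η, h₁⟩ ∈ X.closure.domain),
        S η + X.closure ⟨X.adjoint ⟨S η, h₁⟩, h₂⟩ = η) :
    Dense (S '' (D : Set H)) := by
  have hDd : Dense (X.domain : Set H) := by rw [hdom]; exact hD
  -- formal adjoint relation extended to the closure
  have hadj : ∀ (a : X.adjoint.domain) (u : X.closure.domain),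
      ⟪X.adjoint a, (u : H)⟫ = ⟪(a : H), X.closure u⟫ := by
    intro a u
    have hm : ((u : H), X.closure u) ∈ X.closure.graph := X.closure.mem_graph u
    rw [← hcl.graph_closure_eq_closure_graph] at hm
    have hgr : ((u : H), X.closure u) ∈ closure (X.graph : Set (H × H)) := hm
    have hclosed : IsClosed {p : H × H | ⟪X.adjoint a, p.1⟫ = ⟪(a : H), p.2⟫} := by
      apply isClosed_eq
      · exact (continuous_const.inner continuous_fst)
      · exact (continuous_const.inner continuous_snd)
    have hsub : (X.graph : Set (H × H)) ⊆
        {p : H × H | ⟪X.adjoint a, p.1⟫ = ⟪(a : H), p.2⟫} := by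
      rintro ⟨p1, p2⟩ hp
      rw [SetLike.mem_coe, X.mem_graph_iff] at hp
      obtain ⟨y, hy1, hy2⟩ := hp
      simp only [Set.mem_setOf_eq] at *
      rw [← hy1, ← hy2]
      exact (X.adjoint_isFormalAdjoint hDd) a y
    exact closure_minimal hsub hclosed hgr
  -- key: S has dense range
  have hkey : ∀ v : H, (∀ η : H, ⟪S η, v⟫ = 0) → v = 0 := by
    intro v hv
    obtain ⟨h₁, h₂, heq⟩ := hS v
    have h0 : ⟪S v, S v⟫ + ⟪S v, X.closure ⟨X.adjoint ⟨S v, h₁⟩, h₂⟩⟫ = 0 := by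
      rw [← inner_add_right, heq]; exact hv v
    have h2 : ⟪S v, X.closure ⟨X.adjoint ⟨S v, h₁⟩, h₂⟩⟫
        = ⟪X.adjoint ⟨S v, h₁⟩, (X.adjoint ⟨S v, h₁⟩ : H)⟫ := by
      exact (hadj ⟨S v, h₁⟩ ⟨X.adjoint ⟨S v, h₁⟩, h₂⟩).symm
    rw [h2] at h0
    rw [inner_self_eq_norm_sq_to_K, inner_self_eq_norm_sq_to_K] at h0
    have hre : (‖S v‖ : ℝ) ^ 2 + ‖(X.adjoint ⟨S v, h₁⟩ : H)‖ ^ 2 = 0 := by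
      have h0' : ((‖S v‖ ^ 2 + ‖(X.adjoint ⟨S v, h₁⟩ : H)‖ ^ 2 : ℝ) : ℂ) = 0 := by
        push_cast; exact h0
      exact_mod_cast h0'
    have hSv : S v = 0 := by
      have h1 : ‖S v‖ ^ 2 = 0 := by nlinarith [sq_nonneg ‖S v‖, sq_nonneg ‖(X.adjoint ⟨S v, h₁⟩ : H)‖]
      have := pow_eq_zero_iff (n := 2) (by norm_num) |>.mp h1
      simpa using this
    have hXv : (X.adjoint ⟨S v, h₁⟩ : H) = 0 := by
      have h1 : ‖(X.adjoint ⟨S v, h₁⟩ : H)‖ ^ 2 = 0 := by nlinarith [sq_nonneg ‖S v‖, sq_nonneg ‖(X.adjoint ⟨S v, h₁⟩ : H)‖]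
      have := pow_eq_zero_iff (n := 2) (by norm_num) |>.mp h1
      simpa using this
    -- now v = S v + X̄ (...) = 0
    have hcz : X.closure ⟨X.adjoint ⟨S v, h₁⟩, h₂⟩ = 0 := by
      have harg : (⟨X.adjoint ⟨S v, h₁⟩, h₂⟩ : X.closure.domain) = 0 := by
        ext; simpa using hXv
      rw [harg, LinearPMap.map_zero]
    rw [← heq, hcz, add_zero]
    exact hSv
  have hrange : DenseRange S := by
    have : Dense ((LinearMap.range (S : H →ₗ[ℂ] H) : Submodule ℂ H) : Set H) := by
      rw [Submodule.dense_iff_topologicalClosure_eq_top]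
      rw [← Submodule.orthogonal_orthogonal_eq_closure]
      rw [Submodule.orthogonal_eq_top_iff]
      rw [Submodule.eq_bot_iff]
      intro v hv
      apply hkey
      intro η
      exact (Submodule.mem_orthogonal _ v).mp hv (S η) ⟨η, rfl⟩
    simpa [DenseRange, Set.range, LinearMap.coe_range] using this
  exact hrange.dense_image S.continuous hD
end

section
/- Let X be a densely defined closable operator on a Hilbert space H with domain D, and let S = (I + X̄X*)⁻¹ restricted to D. Then S(D) is a core for X*, i.e., the closure of the restriction of X* to S(D) equals X*. -/
open LinearPMap

local notation "⟪" x ", " y "⟫" => @inner ℂ _ _ x y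

section aux

variable {H : Type*} [NormedAddCommGroup H] [InnerProductSpace ℂ H] [CompleteSpace H]

theorem my_adjoint_closure_inner {X : H →ₗ.[ℂ] H} (hT : Dense (X.domain : Set H))
    (hcl : X.IsClosable) (y : X.adjoint.domain) (a : X.closure.domain) :
    ⟪X.adjoint y, (a : H)⟫ = ⟪(y : H), X.closure a⟫ := by
  have hgraph : ((a : H), X.closure a) ∈ closure (X.graph : Set (H × H)) := by
    have h1 : ((a : H), X.closure a) ∈ X.closure.graph := X.closure.mem_graph a
    rw [← hcl.graph_closure_eq_closure_graph] at h1
    rwa [← X.graph.topologicalClosure_coe]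
  have heq : Set.EqOn (fun p : H × H => ⟪X.adjoint y, p.1⟫)
      (fun p : H × H => ⟪(y : H), p.2⟫) (X.graph : Set (H × H)) := by
    intro p hp
    rw [SetLike.mem_coe, mem_graph_iff] at hp
    obtain ⟨x, hx1, hx2⟩ := hp
    simp only [← hx1, ← hx2]
    exact adjoint_isFormalAdjoint hT y x
  have := heq.closure (by exact Continuous.inner continuous_const continuous_fst)
      (by exact Continuous.inner continuous_const continuous_snd)
  exact this hgraph

theorem my_adjoint_graph_isClosed {X : H →ₗ.[ℂ] H} (hT : Dense (X.domain : Set H)) :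
    IsClosed (X.adjoint.graph : Set (H × H)) := by
  have hset : (X.adjoint.graph : Set (H × H)) =
      ⋂ x : X.domain, {p : H × H | ⟪p.2, (x : H)⟫ = ⟪p.1, X x⟫} := by
    ext p
    simp only [Set.mem_iInter, Set.mem_setOf_eq, SetLike.mem_coe, mem_graph_iff]
    constructor
    · rintro ⟨y, hy1, hy2⟩ x
      rw [← hy1, ← hy2]
      exact adjoint_isFormalAdjoint hT y x
    · intro h
      have hmem : p.1 ∈ X.adjoint.domain :=
        mem_adjoint_domain_of_exists _ ⟨p.2, fun x => h x⟩
      exact ⟨⟨p.1, hmem⟩, rfl, adjoint_apply_eq hT _ (fun x => h x)⟩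
  rw [hset]
  exact isClosed_iInter fun x => isClosed_eq
    (Continuous.inner continuous_snd continuous_const)
    (Continuous.inner continuous_fst continuous_const)

end aux


/-- With `S = (I + X̄X*)⁻¹ ↾ D`, the subspace `S(D)` is a core for `X*`:
the graph of `X*` restricted to `S(D)` is dense in the graph of `X*`. -/
theorem stmt_2 {H : Type*} [NormedAddCommGroup H] [InnerProductSpace ℂ H] [CompleteSpace H]
    (D : Submodule ℂ H) (hD : Dense (D : Set H))
    (X : H →ₗ.[ℂ] H) (hdom : X.domain = D) (hcl : X.IsClosable)
    (S : H →L[ℂ] H)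
    (hS : ∀ η : H, ∃ (h₁ : S η ∈ X.adjoint.domain)
        (h₂ : X.adjoint ⟨S η, h₁⟩ ∈ X.closure.domain),
        S η + X.closure ⟨X.adjoint ⟨S η, h₁⟩, h₂⟩ = η) :
    ∀ ψ : X.adjoint.domain, ((ψ : H), X.adjoint ψ) ∈
      closure {p : H × H | ∃ ξ ∈ D, ∃ h : S ξ ∈ X.adjoint.domain,
        p = (S ξ, X.adjoint ⟨S ξ, h⟩)} := by
  intro ψ
  have hT : Dense (X.domain : Set H) := hdom ▸ hD
  have h₁ : ∀ η : H, S η ∈ X.adjoint.domain := fun η => (hS η).choose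
  have h₂ : ∀ η : H, X.adjoint ⟨S η, h₁ η⟩ ∈ X.closure.domain :=
    fun η => (hS η).choose_spec.choose
  have heq : ∀ η : H, S η + X.closure ⟨X.adjoint ⟨S η, h₁ η⟩, h₂ η⟩ = η :=
    fun η => (hS η).choose_spec.choose_spec
  -- the linear map η ↦ (Sη, X* Sη) into WithLp 2 (H × H)
  set e := WithLp.prodContinuousLinearEquiv 2 ℂ H H with he
  have hvaladd : ∀ (u v : X.adjoint.domain) (h : (u : H) + (v : H) ∈ X.adjoint.domain),
      X.adjoint ⟨(u : H) + (v : H), h⟩ = X.adjoint u + X.adjoint v := by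
    intro u v h
    have huv : (⟨(u : H) + (v : H), h⟩ : X.adjoint.domain) = u + v := Subtype.ext (by simp)
    rw [huv, LinearPMap.map_add]
  have hvalsmul : ∀ (c : ℂ) (u : X.adjoint.domain) (h : c • (u : H) ∈ X.adjoint.domain),
      X.adjoint ⟨c • (u : H), h⟩ = c • X.adjoint u := by
    intro c u h
    have hcu : (⟨c • (u : H), h⟩ : X.adjoint.domain) = c • u := Subtype.ext (by simp)
    rw [hcu, LinearPMap.map_smul]
  set A : H →ₗ[ℂ] WithLp 2 (H × H) :=
    { toFun := fun η => (WithLp.equiv 2 (H × H)).symm (S η, X.adjoint ⟨S η, h₁ η⟩)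
      map_add' := fun x y => by
        apply (WithLp.prodContinuousLinearEquiv 2 ℂ H H).injective
        refine Prod.ext (by simpa using map_add S x y) ?_
        simpa using hvaladd ⟨S x, h₁ x⟩ ⟨S y, h₁ y⟩ (by simpa using h₁ (x + y))
      map_smul' := fun c x => by
        apply (WithLp.prodContinuousLinearEquiv 2 ℂ H H).injective
        refine Prod.ext (by simpa using map_smul S c x) ?_
        simpa using hvalsmul c ⟨S x, h₁ x⟩ (by simpa using h₁ (c • x)) } with hA
  have hAfst : ∀ η : H, (A η).fst = S η := fun η => rfl
  have hAsnd : ∀ η : H, (A η).snd = X.adjoint ⟨S η, h₁ η⟩ := fun η => rfl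
  -- the key norm identity
  have hkey : ∀ η : H, ‖S η‖ ^ 2 + ‖X.adjoint ⟨S η, h₁ η⟩‖ ^ 2 ≤ ‖η‖ * ‖S η‖ := by
    intro η
    set u : X.adjoint.domain := ⟨S η, h₁ η⟩
    set a : X.closure.domain := ⟨X.adjoint u, h₂ η⟩
    have h1 : ⟪(u : H), X.closure a⟫ = (‖X.adjoint u‖ : ℂ) ^ 2 := by
      rw [← my_adjoint_closure_inner hT hcl u a]
      exact inner_self_eq_norm_sq_to_K (𝕜 := ℂ) _
    have h2 : ⟪η, (u : H)⟫ = (‖(u : H)‖ : ℂ) ^ 2 + (‖X.adjoint u‖ : ℂ) ^ 2 := by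
      calc ⟪η, (u : H)⟫ = ⟪(u : H) + X.closure a, (u : H)⟫ := by rw [heq η]
        _ = ⟪(u : H), (u : H)⟫ + ⟪X.closure a, (u : H)⟫ := inner_add_left _ _ _
        _ = (‖(u : H)‖ : ℂ) ^ 2 + (‖X.adjoint u‖ : ℂ) ^ 2 := by
            rw [← inner_conj_symm (X.closure a) (u : H), h1]
            simp [inner_self_eq_norm_sq_to_K]
    have h3 : ‖(u : H)‖ ^ 2 + ‖X.adjoint u‖ ^ 2 ≤ ‖⟪η, (u : H)⟫‖ := by
      rw [h2]
      have : ((‖(u : H)‖ : ℂ) ^ 2 + (‖X.adjoint u‖ : ℂ) ^ 2)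
          = ((‖(u : H)‖ ^ 2 + ‖X.adjoint u‖ ^ 2 : ℝ) : ℂ) := by push_cast; ring
      rw [this, Complex.norm_real]
      exact le_abs_self _
    exact h3.trans (norm_inner_le_norm η (u : H))
  have hbound : ∀ η : H, ‖A η‖ ≤ 1 * ‖η‖ := by
    intro η
    have hsq : ‖A η‖ ^ 2 = ‖S η‖ ^ 2 + ‖X.adjoint ⟨S η, h₁ η⟩‖ ^ 2 := by
      rw [WithLp.prod_norm_sq_eq_of_L2, hAfst, hAsnd]
    have h4 : ‖S η‖ ≤ ‖A η‖ := by
      have := hsq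
      nlinarith [norm_nonneg (A η), norm_nonneg (S η),
        sq_nonneg (‖X.adjoint ⟨S η, h₁ η⟩‖)]
    have h5 : ‖A η‖ ^ 2 ≤ ‖η‖ * ‖A η‖ := by
      rw [hsq]
      calc ‖S η‖ ^ 2 + ‖X.adjoint ⟨S η, h₁ η⟩‖ ^ 2 ≤ ‖η‖ * ‖S η‖ := hkey η
        _ ≤ ‖η‖ * ‖A η‖ := by
            exact mul_le_mul_of_nonneg_left h4 (norm_nonneg η)
    rw [one_mul]
    nlinarith [norm_nonneg (A η), norm_nonneg η]
  set Ac : H →L[ℂ] WithLp 2 (H × H) := A.mkContinuous 1 hbound with hAc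
  set M : Submodule ℂ (WithLp 2 (H × H)) := D.map A with hM
  set G : Submodule ℂ (WithLp 2 (H × H)) := X.adjoint.graph.comap e.toLinearMap with hG
  have hmemG : ∀ z, z ∈ G ↔ e z ∈ X.adjoint.graph := fun z => Iff.rfl
  have hGclosed : IsClosed (G : Set (WithLp 2 (H × H))) := by
    have : (G : Set (WithLp 2 (H × H))) = e ⁻¹' (X.adjoint.graph : Set (H × H)) := rfl
    rw [this]
    exact (my_adjoint_graph_isClosed hT).preimage e.continuous
  haveI : CompleteSpace G := hGclosed.completeSpace_coe
  have heA : ∀ η : H, e (A η) = (S η, X.adjoint ⟨S η, h₁ η⟩) := fun η => by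
    simp [hA, he]
  have hMG : M ≤ G := by
    rintro z ⟨ξ, hξ, rfl⟩
    rw [hmemG, heA]
    exact X.adjoint.mem_graph ⟨S ξ, h₁ ξ⟩
  set MG : Submodule ℂ G := M.comap G.subtype with hMGdef
  have horth : MGᗮ = ⊥ := by
    rw [Submodule.eq_bot_iff]
    intro w hw
    rw [Submodule.mem_orthogonal] at hw
    -- w corresponds to an element of the graph of X*
    obtain ⟨ψ', hψ'1, hψ'2⟩ := (mem_graph_iff _).mp ((hmemG _).mp (w : G).prop)
    -- orthogonality on D
    have hzeroD : ∀ ξ ∈ D, ⟪A ξ, ((w : G) : WithLp 2 (H × H))⟫ = 0 := by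
      intro ξ hξ
      have hmem : A ξ ∈ M := ⟨ξ, hξ, rfl⟩
      have hmemMG : (⟨A ξ, hMG hmem⟩ : G) ∈ MG := hmem
      have := hw _ hmemMG
      rwa [Submodule.coe_inner] at this
    -- extend to all of H by continuity
    have hzero : ∀ η : H, ⟪A η, ((w : G) : WithLp 2 (H × H))⟫ = 0 := by
      intro η
      have hAcA : ∀ η : H, Ac η = A η := fun η => rfl
      have hcl2 : IsClosed {η : H | ⟪Ac η, ((w : G) : WithLp 2 (H × H))⟫ = 0} :=
        isClosed_eq (Continuous.inner Ac.continuous continuous_const) continuous_const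
      have hsub : (D : Set H) ⊆ {η : H | ⟪Ac η, ((w : G) : WithLp 2 (H × H))⟫ = 0} := by
        intro ξ hξ; simpa [hAcA] using hzeroD ξ hξ
      have : closure (D : Set H) ⊆ {η : H | ⟪Ac η, ((w : G) : WithLp 2 (H × H))⟫ = 0} :=
        hcl2.closure_subset_iff.mpr hsub
      rw [hD.closure_eq] at this
      simpa [hAcA] using this (Set.mem_univ η)
    -- now show ψ' = 0
    have hinner : ∀ η : H, ⟪η, (ψ' : H)⟫ = 0 := by
      intro η
      have h0 := hzero η
      rw [WithLp.prod_inner_apply] at h0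
      change ⟪(A η).fst, ((w : G) : WithLp 2 (H × H)).fst⟫ +
        ⟪(A η).snd, ((w : G) : WithLp 2 (H × H)).snd⟫ = 0 at h0
      rw [hAfst, hAsnd] at h0
      have hwfst : (((w : G) : WithLp 2 (H × H))).fst = (ψ' : H) := by
        rw [hψ'1]; rfl
      have hwsnd : (((w : G) : WithLp 2 (H × H))).snd = X.adjoint ψ' := by
        rw [hψ'2]; rfl
      rw [hwfst, hwsnd] at h0
      set a : X.closure.domain := ⟨X.adjoint ⟨S η, h₁ η⟩, h₂ η⟩
      have hterm : ⟪X.adjoint ⟨S η, h₁ η⟩, X.adjoint ψ'⟫ = ⟪X.closure a, (ψ' : H)⟫ := by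
        rw [← inner_conj_symm, my_adjoint_closure_inner hT hcl ψ' a, inner_conj_symm]
      rw [hterm, ← inner_add_left] at h0
      rwa [heq η] at h0
    have hψ'0 : (ψ' : H) = 0 := by
      have := hinner (ψ' : H)
      rwa [inner_self_eq_zero] at this
    have hψ'0' : ψ' = 0 := Subtype.ext hψ'0
    have hw0 : e ((w : G) : WithLp 2 (H × H)) = 0 := by
      have h1 : (e ((w : G) : WithLp 2 (H × H))).1 = 0 := by rw [← hψ'1, hψ'0]
      have h2 : (e ((w : G) : WithLp 2 (H × H))).2 = 0 := by
        rw [← hψ'2, hψ'0']; simp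
      exact Prod.ext h1 h2
    have : ((w : G) : WithLp 2 (H × H)) = 0 := by
      apply e.injective; simpa using hw0
    exact Subtype.ext this
  have htop : MG.topologicalClosure = ⊤ :=
    Submodule.topologicalClosure_eq_top_iff.mpr horth
  -- the target element
  set v : WithLp 2 (H × H) := e.symm ((ψ : H), X.adjoint ψ) with hv
  have hvG : v ∈ G := by
    rw [hmemG, hv, e.apply_symm_apply]
    exact X.adjoint.mem_graph ψ
  have hvcl : (⟨v, hvG⟩ : G) ∈ closure (MG : Set G) := by
    rw [← Submodule.topologicalClosure_coe, htop]
    trivial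
  have hstep1 : v ∈ closure (Subtype.val '' (MG : Set G)) := by
    have := image_closure_subset_closure_image (s := (MG : Set G))
      (f := (Subtype.val : G → WithLp 2 (H × H))) continuous_subtype_val
    exact this ⟨_, hvcl, rfl⟩
  have hstep2 : Subtype.val '' (MG : Set G) ⊆ (M : Set (WithLp 2 (H × H))) := by
    rintro _ ⟨g, hg, rfl⟩; exact hg
  have hstep3 : v ∈ closure (M : Set (WithLp 2 (H × H))) :=
    closure_mono hstep2 hstep1
  have hstep4 : ((ψ : H), X.adjoint ψ) ∈ closure (e '' (M : Set (WithLp 2 (H × H)))) := by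
    have himg := image_closure_subset_closure_image (s := (M : Set (WithLp 2 (H × H))))
      (f := (e : WithLp 2 (H × H) → H × H)) e.continuous
    have : e v ∈ closure (e '' (M : Set (WithLp 2 (H × H)))) := himg ⟨v, hstep3, rfl⟩
    rwa [hv, e.apply_symm_apply] at this
  refine closure_mono ?_ hstep4
  rintro _ ⟨z, ⟨ξ, hξ, rfl⟩, rfl⟩
  exact ⟨ξ, hξ, h₁ ξ, (heA ξ).symm⟩
end

section
/- Let A be a complex *-algebra with unit e, M a family of positive sesquilinear forms φ on A × A each satisfying invariance φ(ax, y) = φ(x, a*y) for all a, x, y ∈ A, and suppose M is sufficient: if φ(x,x) = 0 for all φ ∈ M then x = 0. Define q(x) = sup { φ(xa, xa)^{1/2} : φ ∈ M, a ∈ A, φ(a,a) = 1 }, and let D(q) be the set of x with q(x) < ∞. Then for x, y ∈ D(q), the product xy lies in D(q) and q(xy) ≤ q(x) q(y). -/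
/-- `x` is `M`-bounded: there is `γ ≥ 0` with `φ(xa,xa) ≤ γ²φ(a,a)` for all `φ ∈ M`, `a ∈ A`. -/
def MBdd {A : Type*} [Ring A] [Algebra ℂ A] [StarRing A]
    (M : Set (A → A → ℂ)) (x : A) : Prop :=
  ∃ γ : ℝ, 0 ≤ γ ∧ ∀ φ ∈ M, ∀ a : A, (φ (x * a) (x * a)).re ≤ γ ^ 2 * (φ a a).re

/-- `q(x)`: the least constant `γ` as above. -/
noncomputable def qM {A : Type*} [Ring A] [Algebra ℂ A] [StarRing A]
    (M : Set (A → A → ℂ)) (x : A) : ℝ :=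
  sInf {γ : ℝ | 0 ≤ γ ∧ ∀ φ ∈ M, ∀ a : A, (φ (x * a) (x * a)).re ≤ γ ^ 2 * (φ a a).re}


lemma sInf_key {S : Set ℝ} (hne : S.Nonempty) (hS : ∀ γ ∈ S, 0 ≤ γ)
    {r p : ℝ} (hr : 0 ≤ r) (hp : 0 ≤ p) (h : ∀ γ ∈ S, r ≤ γ ^ 2 * p) :
    r ≤ (sInf S) ^ 2 * p := by
  have hc : 0 ≤ sInf S := le_csInf hne hS
  rcases eq_or_lt_of_le hp with hp0 | hp0
  · obtain ⟨γ, hγ⟩ := hne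
    have := h γ hγ
    rw [← hp0] at this ⊢
    simpa using this
  · have hlb : Real.sqrt (r / p) ≤ sInf S := by
      apply le_csInf hne
      intro γ hγ
      have h1 : r / p ≤ γ ^ 2 := (div_le_iff₀ hp0).2 (by linarith [h γ hγ])
      calc Real.sqrt (r / p) ≤ Real.sqrt (γ ^ 2) := Real.sqrt_le_sqrt h1
        _ = γ := by rw [Real.sqrt_sq (hS γ hγ)]
    have h2 : r / p ≤ (sInf S) ^ 2 := by
      have := mul_self_le_mul_self (Real.sqrt_nonneg _) hlb
      rwa [Real.mul_self_sqrt (div_nonneg hr hp), ← pow_two] at this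
    calc r = (r / p) * p := by field_simp
      _ ≤ (sInf S) ^ 2 * p := by nlinarith

lemma qM_mem {A : Type*} [Ring A] [Algebra ℂ A] [StarRing A]
    (M : Set (A → A → ℂ))
    (hpos : ∀ φ ∈ M, ∀ x : A, 0 ≤ (φ x x).re ∧ (φ x x).im = 0)
    (x : A) (hx : MBdd M x) :
    0 ≤ qM M x ∧ ∀ φ ∈ M, ∀ a : A,
      (φ (x * a) (x * a)).re ≤ (qM M x) ^ 2 * (φ a a).re := by
  set S := {γ : ℝ | 0 ≤ γ ∧ ∀ φ ∈ M, ∀ a : A,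
      (φ (x * a) (x * a)).re ≤ γ ^ 2 * (φ a a).re} with hSdef
  have hne : S.Nonempty := hx
  have hS0 : ∀ γ ∈ S, 0 ≤ γ := fun γ hγ => hγ.1
  refine ⟨le_csInf hne hS0, ?_⟩
  intro φ hφ a
  exact sInf_key hne hS0 (hpos φ hφ (x * a)).1 (hpos φ hφ a).1
    (fun γ hγ => hγ.2 φ hφ a)

/-- For a sufficient family `M` of invariant positive sesquilinear forms on a
unital complex *-algebra, the `M`-bounded elements form a multiplicative set and
`q(xy) ≤ q(x)q(y)`. -/
theorem stmt_5 {A : Type*} [Ring A] [Algebra ℂ A] [StarRing A]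
    (M : Set (A → A → ℂ))
    (hadd₁ : ∀ φ ∈ M, ∀ x x' y : A, φ (x + x') y = φ x y + φ x' y)
    (hadd₂ : ∀ φ ∈ M, ∀ x y y' : A, φ x (y + y') = φ x y + φ x y')
    (hsmul₁ : ∀ φ ∈ M, ∀ (c : ℂ) (x y : A), φ (c • x) y = starRingEnd ℂ c * φ x y)
    (hsmul₂ : ∀ φ ∈ M, ∀ (c : ℂ) (x y : A), φ x (c • y) = c * φ x y)
    (hherm : ∀ φ ∈ M, ∀ x y : A, φ x y = starRingEnd ℂ (φ y x))
    (hpos : ∀ φ ∈ M, ∀ x : A, 0 ≤ (φ x x).re ∧ (φ x x).im = 0)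
    (hinv : ∀ φ ∈ M, ∀ a x y : A, φ (a * x) y = φ x (star a * y))
    (hsuff : ∀ x : A, (∀ φ ∈ M, φ x x = 0) → x = 0)
    (x y : A) (hx : MBdd M x) (hy : MBdd M y) :
    MBdd M (x * y) ∧ qM M (x * y) ≤ qM M x * qM M y := by
  obtain ⟨hx0, hxb⟩ := qM_mem M hpos x hx
  obtain ⟨hy0, hyb⟩ := qM_mem M hpos y hy
  have key : ∀ φ ∈ M, ∀ a : A,
      (φ (x * y * a) (x * y * a)).re ≤ (qM M x * qM M y) ^ 2 * (φ a a).re := by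
    intro φ hφ a
    have h1 := hxb φ hφ (y * a)
    have h2 := hyb φ hφ a
    have hx2 : (0:ℝ) ≤ (qM M x) ^ 2 := sq_nonneg _
    calc (φ (x * y * a) (x * y * a)).re
        = (φ (x * (y * a)) (x * (y * a))).re := by rw [mul_assoc]
      _ ≤ (qM M x) ^ 2 * (φ (y * a) (y * a)).re := h1
      _ ≤ (qM M x) ^ 2 * ((qM M y) ^ 2 * (φ a a).re) := by nlinarith
      _ = (qM M x * qM M y) ^ 2 * (φ a a).re := by ring
  have hmem : qM M x * qM M y ∈ {γ : ℝ | 0 ≤ γ ∧ ∀ φ ∈ M, ∀ a : A,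
      (φ (x * y * a) (x * y * a)).re ≤ γ ^ 2 * (φ a a).re} :=
    ⟨mul_nonneg hx0 hy0, key⟩
  refine ⟨⟨qM M x * qM M y, hmem⟩, ?_⟩
  exact csInf_le ⟨0, fun γ hγ => hγ.1⟩ hmem
end

section
/- Let A be a unital complex *-algebra and M a sufficient family of invariant positive sesquilinear forms on A × A. If x ∈ A is M-bounded (i.e., there exists γ with φ(xa,xa) ≤ γ²φ(a,a) for all φ ∈ M, a ∈ A), then x* is M-bounded and q(x*) = q(x), where q(x) = sup{φ(xa,xa)^{1/2} : φ ∈ M, a ∈ A, φ(a,a) = 1}. -/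
section Aux
variable {A : Type*} [Ring A] [Algebra ℂ A] [StarRing A]

lemma cs_aux (φ : A → A → ℂ)
    (hadd₁ : ∀ x x' y : A, φ (x + x') y = φ x y + φ x' y)
    (hadd₂ : ∀ x y y' : A, φ x (y + y') = φ x y + φ x y')
    (hsmul₁ : ∀ (c : ℂ) (x y : A), φ (c • x) y = starRingEnd ℂ c * φ x y)
    (hsmul₂ : ∀ (c : ℂ) (x y : A), φ x (c • y) = c * φ x y)
    (hherm : ∀ x y : A, φ x y = starRingEnd ℂ (φ y x))
    (hpos : ∀ x : A, 0 ≤ (φ x x).re ∧ (φ x x).im = 0)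
    (a b : A) : Complex.normSq (φ a b) ≤ (φ a a).re * (φ b b).re := by
  set z := φ a b with hz
  set s := Complex.normSq z with hs
  have hs0 : 0 ≤ s := Complex.normSq_nonneg z
  have hA : 0 ≤ (φ a a).re := (hpos a).1
  have hB : 0 ≤ (φ b b).re := (hpos b).1
  have hBim : (φ b b).im = 0 := (hpos b).2
  have hkey : ∀ t : ℝ, 0 ≤ (φ a a).re - 2*t*s + t^2*s*(φ b b).re := by
    intro t
    set c : ℂ := (-(t:ℂ)) * (starRingEnd ℂ z) with hc
    have h0 := (hpos (a + c • b)).1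
    have expand : φ (a + c • b) (a + c • b)
        = φ a a + c * φ a b + starRingEnd ℂ c * φ b a + starRingEnd ℂ c * (c * φ b b) := by
      simp only [hadd₁, hadd₂, hsmul₁, hsmul₂]; ring
    rw [expand, hherm b a] at h0
    simp only [hc, ← hz, map_mul, map_neg, Complex.conj_conj, Complex.conj_ofReal,
      Complex.add_re, Complex.mul_re, Complex.mul_im, Complex.neg_re, Complex.neg_im,
      Complex.ofReal_re, Complex.ofReal_im, Complex.conj_re, Complex.conj_im] at h0
    simp only [hs, Complex.normSq_apply]
    nlinarith [h0, sq_nonneg z.re, sq_nonneg z.im]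
  rcases eq_or_lt_of_le hB with hB0 | hB0
  · by_contra hlt
    push_neg at hlt
    have hspos : 0 < s := lt_of_le_of_lt (mul_nonneg hA hB) hlt
    have hk := hkey (((φ a a).re + 1) / (2 * s))
    rw [← hB0] at hk
    have h2 : 2 * (((φ a a).re + 1) / (2 * s)) * s = (φ a a).re + 1 := by
      field_simp
    nlinarith
  · have hk := hkey (1 / (φ b b).re)
    have hne : (φ b b).re ≠ 0 := ne_of_gt hB0
    have e : (1 / (φ b b).re) ^ 2 * s * (φ b b).re = s / (φ b b).re := by
      field_simp
    have e2 : 2 * (1 / (φ b b).re) * s = 2 * (s / (φ b b).re) := by ring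
    rw [e, e2] at hk
    have : s / (φ b b).re ≤ (φ a a).re := by linarith
    exact (div_le_iff₀ hB0).mp this

lemma star_bound (M : Set (A → A → ℂ))
    (hadd₁ : ∀ φ ∈ M, ∀ x x' y : A, φ (x + x') y = φ x y + φ x' y)
    (hadd₂ : ∀ φ ∈ M, ∀ x y y' : A, φ x (y + y') = φ x y + φ x y')
    (hsmul₁ : ∀ φ ∈ M, ∀ (c : ℂ) (x y : A), φ (c • x) y = starRingEnd ℂ c * φ x y)
    (hsmul₂ : ∀ φ ∈ M, ∀ (c : ℂ) (x y : A), φ x (c • y) = c * φ x y)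
    (hherm : ∀ φ ∈ M, ∀ x y : A, φ x y = starRingEnd ℂ (φ y x))
    (hpos : ∀ φ ∈ M, ∀ x : A, 0 ≤ (φ x x).re ∧ (φ x x).im = 0)
    (hinv : ∀ φ ∈ M, ∀ a x y : A, φ (a * x) y = φ x (star a * y))
    (x : A) (γ : ℝ) (hγ : 0 ≤ γ)
    (h : ∀ φ ∈ M, ∀ a : A, (φ (x * a) (x * a)).re ≤ γ ^ 2 * (φ a a).re) :
    ∀ φ ∈ M, ∀ a : A, (φ (star x * a) (star x * a)).re ≤ γ ^ 2 * (φ a a).re := by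
  intro φ hφ a
  set u := star x * a with hu
  set t := (φ u u).re with ht
  have ht0 : 0 ≤ t := (hpos φ hφ u).1
  have hre : t = (φ (x * u) a).re := by
    rw [ht, hu, hinv φ hφ (star x) a (star x * a), star_star,
      hherm φ hφ a (x * (star x * a)), Complex.conj_re]
  have hcs := cs_aux φ (hadd₁ φ hφ) (hadd₂ φ hφ) (hsmul₁ φ hφ) (hsmul₂ φ hφ)
    (hherm φ hφ) (hpos φ hφ) (x * u) a
  have ht2 : t ^ 2 ≤ Complex.normSq (φ (x * u) a) := by
    rw [Complex.normSq_apply, ← hre]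
    nlinarith [sq_nonneg (φ (x * u) a).im]
  have hbd : (φ (x * u) (x * u)).re ≤ γ ^ 2 * t := h φ hφ u
  have hAa : 0 ≤ (φ a a).re := (hpos φ hφ a).1
  have hchain : t ^ 2 ≤ γ ^ 2 * t * (φ a a).re := by
    calc t ^ 2 ≤ Complex.normSq (φ (x * u) a) := ht2
    _ ≤ (φ (x * u) (x * u)).re * (φ a a).re := hcs
    _ ≤ γ ^ 2 * t * (φ a a).re := by nlinarith
  rcases eq_or_lt_of_le ht0 with ht0' | ht0'
  · rw [← ht0']; positivity
  · nlinarith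

end Aux

/-- If `x` is `M`-bounded, so is `x*`, and `q(x*) = q(x)`. -/
theorem stmt_6 {A : Type*} [Ring A] [Algebra ℂ A] [StarRing A]
    (M : Set (A → A → ℂ))
    (hadd₁ : ∀ φ ∈ M, ∀ x x' y : A, φ (x + x') y = φ x y + φ x' y)
    (hadd₂ : ∀ φ ∈ M, ∀ x y y' : A, φ x (y + y') = φ x y + φ x y')
    (hsmul₁ : ∀ φ ∈ M, ∀ (c : ℂ) (x y : A), φ (c • x) y = starRingEnd ℂ c * φ x y)
    (hsmul₂ : ∀ φ ∈ M, ∀ (c : ℂ) (x y : A), φ x (c • y) = c * φ x y)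
    (hherm : ∀ φ ∈ M, ∀ x y : A, φ x y = starRingEnd ℂ (φ y x))
    (hpos : ∀ φ ∈ M, ∀ x : A, 0 ≤ (φ x x).re ∧ (φ x x).im = 0)
    (hinv : ∀ φ ∈ M, ∀ a x y : A, φ (a * x) y = φ x (star a * y))
    (hsuff : ∀ x : A, (∀ φ ∈ M, φ x x = 0) → x = 0)
    (x : A) (hx : MBdd M x) :
    MBdd M (star x) ∧ qM M (star x) = qM M x := by
  obtain ⟨γ, hγ, h⟩ := hx
  refine ⟨⟨γ, hγ, star_bound M hadd₁ hadd₂ hsmul₁ hsmul₂ hherm hpos hinv x γ hγ h⟩, ?_⟩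
  unfold qM
  congr 1
  ext δ
  simp only [Set.mem_setOf_eq]
  constructor
  · rintro ⟨hδ, hd⟩
    refine ⟨hδ, ?_⟩
    have := star_bound M hadd₁ hadd₂ hsmul₁ hsmul₂ hherm hpos hinv (star x) δ hδ hd
    simpa [star_star] using this
  · rintro ⟨hδ, hd⟩
    exact ⟨hδ, star_bound M hadd₁ hadd₂ hsmul₁ hsmul₂ hherm hpos hinv x δ hδ hd⟩
end

section
/- Let A be a unital complex *-algebra, φ : A × A → ℂ a positive sesquilinear form with φ(ax,y) = φ(x,a*y) for all a,x,y ∈ A. Then for every a, b ∈ A and every n ∈ ℕ, the Kaplansky-like inequality holds: φ(ab, ab) ≤ φ(b,b)^{1 - 2^{-(n+1)}} · φ((a*a)^{2ⁿ} b, (a*a)^{2ⁿ} b)^{2^{-(n+1)}}. -/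
/-- Real induction engine for the Kaplansky iteration. -/
lemma stmt8_aux (B : ℝ) (hB : 0 ≤ B) (X : ℕ → ℝ) (hX : ∀ k, 0 ≤ X k)
    (r : ℝ) (hr : 0 ≤ r) (h0 : r ^ 2 ≤ B * X 0)
    (hstep : ∀ k, (X k) ^ 2 ≤ B * X (k + 1)) :
    ∀ n : ℕ, r ≤ B ^ ((1 : ℝ) - (2 : ℝ) ^ (-((n : ℝ) + 1))) *
      (X n) ^ ((2 : ℝ) ^ (-((n : ℝ) + 1))) := by
  have sqrt_le : ∀ u v w : ℝ, 0 ≤ u → 0 ≤ v → 0 ≤ w → u ^ 2 ≤ v * w →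
      u ≤ v ^ ((1:ℝ)/2) * w ^ ((1:ℝ)/2) := by
    intro u v w hu hv hw h
    have h' := Real.rpow_le_rpow (by positivity) h (by norm_num : (0:ℝ) ≤ 1/2)
    rw [← Real.rpow_natCast u 2, ← Real.rpow_mul hu] at h'
    norm_num at h'
    rwa [Real.mul_rpow hv hw] at h'
  intro n
  induction n with
  | zero =>
      have h := sqrt_le r B (X 0) hr hB (hX 0) h0
      have e1 : -(((0:ℕ) : ℝ) + 1) = (-1 : ℝ) := by norm_num
      rw [e1, Real.rpow_neg_one]
      norm_num
      convert h using 2 <;> norm_num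
  | succ n ih =>
      set e : ℝ := (2 : ℝ) ^ (-((n : ℝ) + 1)) with he_def
      have he : 0 < e := Real.rpow_pos_of_pos two_pos _
      have he1 : e ≤ 1 :=
        Real.rpow_le_one_of_one_le_of_nonpos (by norm_num) (by push_cast; nlinarith [Nat.cast_nonneg (α := ℝ) n])
      have hXs := sqrt_le (X n) B (X (n+1)) (hX n) hB (hX (n+1)) (hstep n)
      have h1 : (X n) ^ e ≤ (B ^ ((1:ℝ)/2) * (X (n+1)) ^ ((1:ℝ)/2)) ^ e :=
        Real.rpow_le_rpow (hX n) hXs he.le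
      have h2 : (B ^ ((1:ℝ)/2) * (X (n+1)) ^ ((1:ℝ)/2)) ^ e
          = B ^ (e/2) * (X (n+1)) ^ (e/2) := by
        rw [Real.mul_rpow (Real.rpow_nonneg hB _) (Real.rpow_nonneg (hX (n+1)) _),
          ← Real.rpow_mul hB, ← Real.rpow_mul (hX (n+1))]
        ring_nf
      have h4 : r ≤ B ^ ((1:ℝ) - e) * (B ^ (e/2) * (X (n+1)) ^ (e/2)) := by
        calc r ≤ B ^ ((1:ℝ) - e) * ((X n) ^ e) := ih
          _ ≤ _ := by
              apply mul_le_mul_of_nonneg_left _ (Real.rpow_nonneg hB _)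
              rw [← h2]; exact h1
      have h5 : B ^ ((1:ℝ) - e) * B ^ (e/2) = B ^ ((1:ℝ) - e/2) := by
        rw [← Real.rpow_add' hB (by nlinarith)]
        ring_nf
      have he3 : (2:ℝ) ^ (-(((n:ℕ)+1 : ℕ) : ℝ) - 1) = e / 2 := by
        have : (-(((n:ℕ)+1 : ℕ) : ℝ) - 1) = (-((n:ℝ)+1)) + (-1) := by push_cast; ring
        rw [this, Real.rpow_add two_pos, Real.rpow_neg_one, he_def]
        ring
      have hgoal : -((((n:ℕ)+1 : ℕ)) : ℝ) - 1 = -(((((n:ℕ)+1 : ℕ)) : ℝ) + 1) := by ring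
      rw [← hgoal, he3]
      calc r ≤ B ^ ((1:ℝ) - e) * (B ^ (e/2) * (X (n+1)) ^ (e/2)) := h4
        _ = B ^ ((1:ℝ) - e/2) * (X (n+1)) ^ (e/2) := by rw [← h5]; ring


/-- Cauchy–Schwarz for a positive sesquilinear form. -/
lemma stmt8_cs {A : Type*} [Ring A] [Algebra ℂ A]
    (φ : A → A → ℂ)
    (hadd₁ : ∀ x x' y : A, φ (x + x') y = φ x y + φ x' y)
    (hadd₂ : ∀ x y y' : A, φ x (y + y') = φ x y + φ x y')
    (hsmul₁ : ∀ (c : ℂ) (x y : A), φ (c • x) y = starRingEnd ℂ c * φ x y)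
    (hsmul₂ : ∀ (c : ℂ) (x y : A), φ x (c • y) = c * φ x y)
    (hherm : ∀ x y : A, φ x y = starRingEnd ℂ (φ y x))
    (hpos : ∀ x : A, 0 ≤ (φ x x).re ∧ (φ x x).im = 0)
    (x y : A) :
    Complex.normSq (φ x y) ≤ (φ x x).re * (φ y y).re := by
  set m : ℂ := φ x y with hm
  set N : ℝ := Complex.normSq m with hN
  set p : ℝ := (φ x x).re with hp
  set q : ℝ := (φ y y).re with hq'
  have expand : ∀ t : ℂ, φ (x + t • y) (x + t • y)
      = φ x x + (t * m + (starRingEnd ℂ t * starRingEnd ℂ m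
        + starRingEnd ℂ t * t * φ y y)) := by
    intro t
    rw [hadd₁, hadd₂, hadd₂, hsmul₁, hsmul₂, hsmul₂, hsmul₁, hherm y x, ← hm]
    ring
  have hQ : ∀ s : ℝ, 0 ≤ p - 2 * s * N + s ^ 2 * N * q := by
    intro s
    have h1 := (hpos (x + (-(s : ℂ) * starRingEnd ℂ m) • y)).1
    rw [expand] at h1
    simp only [Complex.add_re, Complex.mul_re, Complex.mul_im, Complex.neg_re,
      Complex.neg_im, Complex.ofReal_re, Complex.ofReal_im, Complex.conj_re,
      Complex.conj_im, map_mul, map_neg, Complex.conj_ofReal] at h1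
    rw [hN, Complex.normSq_apply, hp, hq']
    nlinarith [h1]
  have hNnn : 0 ≤ N := Complex.normSq_nonneg m
  rcases eq_or_lt_of_le (hpos y).1 with hq | hq
  · -- q = 0
    have hq0 : q = 0 := hq.symm
    have hN0 : N = 0 := by
      by_contra hN1
      have hNpos : 0 < N := lt_of_le_of_ne hNnn (Ne.symm hN1)
      have h1 := hQ ((p + 1) / (2 * N))
      rw [hq0] at h1
      have hring : p - 2 * ((p + 1) / (2 * N)) * N + ((p + 1) / (2 * N)) ^ 2 * N * 0 = -1 := by
        field_simp
        ring
      linarith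
    rw [hN0, hq0]
    simp
  · -- q > 0
    have h1 := hQ (1 / q)
    have hring : p - 2 * (1 / q) * N + (1 / q) ^ 2 * N * q = p - N / q := by
      field_simp
      ring
    rw [hring] at h1
    have h2 : N / q ≤ p := by linarith
    calc N = (N / q) * q := (div_mul_cancel₀ N hq.ne').symm
      _ ≤ p * q := mul_le_mul_of_nonneg_right h2 hq.le



/-- Kaplansky-like inequality: for an invariant positive sesquilinear form `φ`
on a unital complex *-algebra, for all `a, b` and `n`,
`φ(ab,ab) ≤ φ(b,b)^{1-2^{-(n+1)}} · φ((a*a)^{2ⁿ}b,(a*a)^{2ⁿ}b)^{2^{-(n+1)}}`. -/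
theorem stmt_8 {A : Type*} [Ring A] [Algebra ℂ A] [StarRing A]
    (φ : A → A → ℂ)
    (hadd₁ : ∀ x x' y : A, φ (x + x') y = φ x y + φ x' y)
    (hadd₂ : ∀ x y y' : A, φ x (y + y') = φ x y + φ x y')
    (hsmul₁ : ∀ (c : ℂ) (x y : A), φ (c • x) y = starRingEnd ℂ c * φ x y)
    (hsmul₂ : ∀ (c : ℂ) (x y : A), φ x (c • y) = c * φ x y)
    (hherm : ∀ x y : A, φ x y = starRingEnd ℂ (φ y x))
    (hpos : ∀ x : A, 0 ≤ (φ x x).re ∧ (φ x x).im = 0)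
    (hinv : ∀ a x y : A, φ (a * x) y = φ x (star a * y)) :
    ∀ (a b : A) (n : ℕ),
      (φ (a * b) (a * b)).re ≤
        ((φ b b).re) ^ ((1 : ℝ) - (2 : ℝ) ^ (-((n : ℝ) + 1))) *
          ((φ ((star a * a) ^ (2 ^ n) * b) ((star a * a) ^ (2 ^ n) * b)).re)
            ^ ((2 : ℝ) ^ (-((n : ℝ) + 1))) := by
  have key := stmt8_cs φ hadd₁ hadd₂ hsmul₁ hsmul₂ hherm hpos
  intro a b n
  set c : A := star a * a with hc
  have hcstar : star c = c := by rw [hc, star_mul, star_star]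
  have hcp : ∀ m : ℕ, star (c ^ m) = c ^ m := fun m => by rw [star_pow, hcstar]
  set B : ℝ := (φ b b).re with hB
  have hBnn : 0 ≤ B := (hpos b).1
  set X : ℕ → ℝ := fun k => (φ (c ^ (2 ^ k) * b) (c ^ (2 ^ k) * b)).re with hX
  have hXnn : ∀ k, 0 ≤ X k := fun k => (hpos _).1
  have hiter : ∀ m : ℕ, φ (c ^ m * b) (c ^ m * b) = φ b (c ^ (2 * m) * b) := by
    intro m
    rw [hinv, hcp, ← mul_assoc, ← pow_add, two_mul]
  set r : ℝ := (φ (a * b) (a * b)).re with hr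
  have hrnn : 0 ≤ r := (hpos _).1
  have hr0 : φ (a * b) (a * b) = φ b (c * b) := by
    rw [hinv, hc, mul_assoc]
  have h0 : r ^ 2 ≤ B * X 0 := by
    have h1 : r ≤ ‖φ b (c * b)‖ := by
      rw [hr, hr0]; exact Complex.re_le_norm _
    have h2 := key b (c * b)
    have h3 : ‖φ b (c * b)‖ ^ 2 = Complex.normSq (φ b (c * b)) :=
      Complex.sq_norm _
    have h4 : X 0 = (φ (c * b) (c * b)).re := by
      simp [hX, pow_one]
    calc r ^ 2 ≤ ‖φ b (c * b)‖ ^ 2 := by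
          exact pow_le_pow_left₀ hrnn h1 2
      _ = Complex.normSq (φ b (c * b)) := h3
      _ ≤ B * X 0 := by rw [h4]; exact h2
  have hstep : ∀ k, (X k) ^ 2 ≤ B * X (k + 1) := by
    intro k
    have h1 : φ (c ^ (2 ^ k) * b) (c ^ (2 ^ k) * b) = φ b (c ^ (2 ^ (k + 1)) * b) := by
      rw [hiter, ← pow_succ']
    have h2 : X k ≤ ‖φ b (c ^ (2 ^ (k + 1)) * b)‖ := by
      rw [hX]; simp only; rw [h1]; exact Complex.re_le_norm _
    have h3 := key b (c ^ (2 ^ (k + 1)) * b)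
    calc (X k) ^ 2 ≤ ‖φ b (c ^ (2 ^ (k + 1)) * b)‖ ^ 2 :=
          pow_le_pow_left₀ (hXnn k) h2 2
      _ = Complex.normSq (φ b (c ^ (2 ^ (k + 1)) * b)) := Complex.sq_norm _
      _ ≤ B * X (k + 1) := h3
  exact stmt8_aux B hBnn X hXnn r hrnn h0 hstep n
end

section
/- Let A be a unital complex *-algebra carrying a family of submultiplicative-type seminorm bounds: suppose φ is a positive sesquilinear invariant form (φ(ax,y) = φ(x,a*y)) that is continuous with respect to a seminorm p in the sense that φ(x,y) ≤ C p(x) p(y), and a ∈ A satisfies liminf_{n→∞} (p((a*a)^{2ⁿ}))^{2^{-n}} = γ_a < ∞. Suppose furthermore that right multiplication by b is p-continuous: p(xb) ≤ C_b p(x) for all x. Then φ(ab, ab) ≤ γ_a φ(b,b) for every b ∈ A. -/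
open Filter

/-- If the invariant positive sesquilinear form `φ` is `p`-continuous,
right multiplications are `p`-continuous, and
`γ_a = liminf (p((a*a)^{2ⁿ}))^{2^{-n}} < ∞`, then `φ(ab,ab) ≤ γ_a φ(b,b)` for all `b`. -/
theorem stmt_9 {A : Type*} [Ring A] [Algebra ℂ A] [StarRing A]
    (φ : A → A → ℂ)
    (hadd₁ : ∀ x x' y : A, φ (x + x') y = φ x y + φ x' y)
    (hadd₂ : ∀ x y y' : A, φ x (y + y') = φ x y + φ x y')
    (hsmul₁ : ∀ (c : ℂ) (x y : A), φ (c • x) y = starRingEnd ℂ c * φ x y)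
    (hsmul₂ : ∀ (c : ℂ) (x y : A), φ x (c • y) = c * φ x y)
    (hherm : ∀ x y : A, φ x y = starRingEnd ℂ (φ y x))
    (hpos : ∀ x : A, 0 ≤ (φ x x).re ∧ (φ x x).im = 0)
    (hinv : ∀ a x y : A, φ (a * x) y = φ x (star a * y))
    (p : A → ℝ) (hpnn : ∀ x : A, 0 ≤ p x) (C : ℝ)
    (hp : ∀ x y : A, ‖φ x y‖ ≤ C * (p x * p y))
    (hpmul : ∀ b : A, ∃ Cb : ℝ, 0 < Cb ∧ ∀ x : A, p (x * b) ≤ Cb * p x)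
    (a : A) (γa : ℝ)
    (hbdd : IsBoundedUnder (· ≤ ·) atTop
      (fun n : ℕ => (p ((star a * a) ^ (2 ^ n))) ^ ((2 : ℝ) ^ (-(n : ℝ)))))
    (hγ : liminf (fun n : ℕ => (p ((star a * a) ^ (2 ^ n))) ^ ((2 : ℝ) ^ (-(n : ℝ)))) atTop = γa) :
    ∀ b : A, (φ (a * b) (a * b)).re ≤ γa * (φ b b).re := by
  intro b
  obtain ⟨Cb, hCb, hCbp⟩ := hpmul b
  -- Cauchy–Schwarz
  have cs : ∀ x y : A, ‖φ x y‖ ^ 2 ≤ (φ x x).re * (φ y y).re := by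
    intro x y
    letI core : PreInnerProductSpace.Core ℂ A :=
      { inner := φ
        conj_inner_symm := fun x y => (hherm x y).symm
        re_inner_nonneg := fun x => (hpos x).1
        add_left := hadd₁
        smul_left := fun x y r => hsmul₁ r x y }
    have h := @InnerProductSpace.Core.inner_mul_inner_self_le ℂ A _ _ _ core x y
    have hsym : φ y x = starRingEnd ℂ (φ x y) := by rw [hherm x y]; simp
    simp only [RCLike.re_to_complex] at h
    calc ‖φ x y‖ ^ 2 = ‖φ x y‖ * ‖φ y x‖ := by
          rw [hsym]; simp [sq]
      _ ≤ (φ x x).re * (φ y y).re := h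
  set c : A := star a * a with hcdef
  have hcstar : star c = c := by simp [hcdef]
  have hmove : ∀ (k : ℕ) (x y : A), φ (c ^ k * x) y = φ x (c ^ k * y) := by
    intro k
    induction k with
    | zero => intro x y; simp
    | succ k ih =>
      intro x y
      have h1 : c ^ (k + 1) * x = c ^ k * (c * x) := by rw [pow_succ, mul_assoc]
      have h2 : c * (c ^ k * y) = c ^ (k + 1) * y := by rw [← mul_assoc, ← pow_succ']
      rw [h1, ih, hinv, hcstar, h2]
  set F : ℕ → ℝ := fun k => (φ (c ^ k * b) (c ^ k * b)).re with hFdef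
  have hF0 : ∀ k, 0 ≤ F k := fun k => (hpos _).1
  have hFb : ∀ k, F k = (φ b (c ^ (2 * k) * b)).re := by
    intro k
    have : c ^ k * (c ^ k * b) = c ^ (2 * k) * b := by
      rw [← mul_assoc, ← pow_add, two_mul]
    rw [hFdef]
    simp only
    rw [hmove k, this]
  have hFsq : ∀ k, F k ^ 2 ≤ F 0 * F (2 * k) := by
    intro k
    have h1 : F k ≤ ‖φ b (c ^ (2 * k) * b)‖ := by
      rw [hFb k]; exact Complex.re_le_norm _
    have h2 := cs b (c ^ (2 * k) * b)
    have h3 : F k ^ 2 ≤ ‖φ b (c ^ (2 * k) * b)‖ ^ 2 :=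
      pow_le_pow_left₀ (hF0 k) h1 2
    refine h3.trans (h2.trans_eq ?_)
    congr 1
    simp [hFdef]
  have hF02 : F 0 = (φ b b).re := by simp [hFdef]
  have key : ∀ n : ℕ, F 1 ^ (2 ^ n) ≤ F 0 ^ (2 ^ n - 1) * F (2 ^ n) := by
    intro n
    induction n with
    | zero => simp
    | succ n ih =>
      have hpow1 : (1 : ℕ) ≤ 2 ^ n := Nat.one_le_two_pow
      have h1 : F 1 ^ 2 ^ (n + 1) = (F 1 ^ 2 ^ n) ^ 2 := by
        rw [← pow_mul, pow_succ]
      have h2 : (F 1 ^ 2 ^ n) ^ 2 ≤ (F 0 ^ (2 ^ n - 1) * F (2 ^ n)) ^ 2 :=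
        pow_le_pow_left₀ (pow_nonneg (hF0 1) _) ih 2
      have h3 : (F 0 ^ (2 ^ n - 1) * F (2 ^ n)) ^ 2
          = F 0 ^ (2 * (2 ^ n - 1)) * F (2 ^ n) ^ 2 := by
        rw [mul_pow, ← pow_mul, mul_comm (2 ^ n - 1) 2]
      have h4 : F (2 ^ n) ^ 2 ≤ F 0 * F (2 ^ (n + 1)) := by
        have := hFsq (2 ^ n)
        rwa [← pow_succ'] at this
      have h5 : F 0 ^ (2 * (2 ^ n - 1)) * F (2 ^ n) ^ 2
          ≤ F 0 ^ (2 * (2 ^ n - 1)) * (F 0 * F (2 ^ (n + 1))) :=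
        mul_le_mul_of_nonneg_left h4 (pow_nonneg (hF0 0) _)
      have h6 : F 0 ^ (2 * (2 ^ n - 1)) * (F 0 * F (2 ^ (n + 1)))
          = F 0 ^ (2 ^ (n + 1) - 1) * F (2 ^ (n + 1)) := by
        rw [← mul_assoc, ← pow_succ]
        congr 2
        omega
      calc F 1 ^ 2 ^ (n + 1) = (F 1 ^ 2 ^ n) ^ 2 := h1
        _ ≤ (F 0 ^ (2 ^ n - 1) * F (2 ^ n)) ^ 2 := h2
        _ = F 0 ^ (2 * (2 ^ n - 1)) * F (2 ^ n) ^ 2 := h3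
        _ ≤ F 0 ^ (2 * (2 ^ n - 1)) * (F 0 * F (2 ^ (n + 1))) := h5
        _ = F 0 ^ (2 ^ (n + 1) - 1) * F (2 ^ (n + 1)) := h6
  set L : ℝ := (φ (a * b) (a * b)).re with hLdef
  have hL0 : 0 ≤ L := (hpos _).1
  have hab : φ (a * b) (a * b) = φ b (c ^ 1 * b) := by
    rw [hinv, pow_one, ← mul_assoc]
  have hLsq : L ^ 2 ≤ F 0 * F 1 := by
    have h1 : L ≤ ‖φ b (c ^ 1 * b)‖ := by
      rw [hLdef, hab]; exact Complex.re_le_norm _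
    have h2 := cs b (c ^ 1 * b)
    have h3 : L ^ 2 ≤ ‖φ b (c ^ 1 * b)‖ ^ 2 := pow_le_pow_left₀ hL0 h1 2
    refine h3.trans (h2.trans_eq ?_)
    congr 1
    simp [hFdef]
  set K : ℝ := max (max C 0 * Cb ^ 2) 1 with hKdef
  have hK1 : (1 : ℝ) ≤ K := le_max_right _ _
  have hK0 : (0 : ℝ) < K := lt_of_lt_of_le one_pos hK1
  have hFK : ∀ k, F k ≤ K * p (c ^ k) ^ 2 := by
    intro k
    have h1 : F k ≤ ‖φ (c ^ k * b) (c ^ k * b)‖ := Complex.re_le_norm _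
    have h2 := hp (c ^ k * b) (c ^ k * b)
    have h3 : C * (p (c ^ k * b) * p (c ^ k * b))
        ≤ max C 0 * (p (c ^ k * b) * p (c ^ k * b)) := by
      apply mul_le_mul_of_nonneg_right (le_max_left _ _)
      exact mul_nonneg (hpnn _) (hpnn _)
    have h4 : p (c ^ k * b) * p (c ^ k * b) ≤ (Cb * p (c ^ k)) * (Cb * p (c ^ k)) :=
      mul_le_mul (hCbp _) (hCbp _) (hpnn _) (mul_nonneg hCb.le (hpnn _))
    have h5 : max C 0 * (p (c ^ k * b) * p (c ^ k * b))
        ≤ max C 0 * ((Cb * p (c ^ k)) * (Cb * p (c ^ k))) :=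
      mul_le_mul_of_nonneg_left h4 (le_max_right _ _)
    have h6 : max C 0 * ((Cb * p (c ^ k)) * (Cb * p (c ^ k)))
        = (max C 0 * Cb ^ 2) * p (c ^ k) ^ 2 := by ring
    have h7 : (max C 0 * Cb ^ 2) * p (c ^ k) ^ 2 ≤ K * p (c ^ k) ^ 2 :=
      mul_le_mul_of_nonneg_right (le_max_left _ _) (sq_nonneg _)
    linarith
  -- combined natural-power bound
  have main : ∀ n : ℕ, L ^ (2 ^ (n + 1)) ≤ (F 0 ^ (2 ^ (n + 1) - 1) * K) * p (c ^ (2 ^ n)) ^ 2 := by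
    intro n
    have h1 : L ^ 2 ^ (n + 1) = (L ^ 2) ^ 2 ^ n := by rw [← pow_mul, mul_comm, pow_succ, mul_comm]
    have h2 : (L ^ 2) ^ 2 ^ n ≤ (F 0 * F 1) ^ 2 ^ n :=
      pow_le_pow_left₀ (sq_nonneg L) hLsq _
    have h3 : (F 0 * F 1) ^ 2 ^ n = F 0 ^ 2 ^ n * F 1 ^ 2 ^ n := mul_pow _ _ _
    have h4 : F 0 ^ 2 ^ n * F 1 ^ 2 ^ n ≤ F 0 ^ 2 ^ n * (F 0 ^ (2 ^ n - 1) * F (2 ^ n)) :=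
      mul_le_mul_of_nonneg_left (key n) (pow_nonneg (hF0 0) _)
    have h5 : F 0 ^ 2 ^ n * (F 0 ^ (2 ^ n - 1) * F (2 ^ n))
        = F 0 ^ (2 ^ (n + 1) - 1) * F (2 ^ n) := by
      rw [← mul_assoc, ← pow_add]
      congr 2
      have : (1 : ℕ) ≤ 2 ^ n := Nat.one_le_two_pow
      omega
    have h6 : F 0 ^ (2 ^ (n + 1) - 1) * F (2 ^ n)
        ≤ F 0 ^ (2 ^ (n + 1) - 1) * (K * p (c ^ (2 ^ n)) ^ 2) :=
      mul_le_mul_of_nonneg_left (hFK _) (pow_nonneg (hF0 0) _)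
    calc L ^ 2 ^ (n + 1) = (L ^ 2) ^ 2 ^ n := h1
      _ ≤ (F 0 * F 1) ^ 2 ^ n := h2
      _ = F 0 ^ 2 ^ n * F 1 ^ 2 ^ n := h3
      _ ≤ F 0 ^ 2 ^ n * (F 0 ^ (2 ^ n - 1) * F (2 ^ n)) := h4
      _ = F 0 ^ (2 ^ (n + 1) - 1) * F (2 ^ n) := h5
      _ ≤ (F 0 ^ (2 ^ (n + 1) - 1) * K) * p (c ^ (2 ^ n)) ^ 2 := by
          rw [mul_assoc]; exact h6
  set u : ℕ → ℝ := fun n => p ((star a * a) ^ 2 ^ n) ^ ((2 : ℝ) ^ (-(n : ℝ))) with hudef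
  have hu0 : ∀ n, 0 ≤ u n := fun n => Real.rpow_nonneg (hpnn _) _
  set e : ℕ → ℝ := fun n => ((2 : ℝ) ^ (n + 1 : ℕ))⁻¹ with hedef
  have he0 : ∀ n, 0 < e n := fun n => by positivity
  have heexp : ∀ n : ℕ, ((2 : ℝ) ^ (-(n : ℝ))) = 2 * e n := by
    intro n
    rw [hedef]
    simp only
    rw [Real.rpow_neg (by norm_num : (0:ℝ) ≤ 2), Real.rpow_natCast]
    rw [pow_succ]
    field_simp
  -- rpow form of the main bound
  have main' : ∀ n : ℕ, L ≤ (F 0 ^ (2 ^ (n + 1) - 1 : ℕ) * K) ^ (e n) * u n := by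
    intro n
    have hme : ((2 ^ (n + 1) : ℕ) : ℝ) * e n = 1 := by
      rw [hedef]
      push_cast
      field_simp
    have hL : L = (L ^ (2 ^ (n + 1) : ℕ)) ^ (e n) := by
      rw [← Real.rpow_natCast L (2 ^ (n + 1)), ← Real.rpow_mul hL0, hme, Real.rpow_one]
    rw [hL]
    have hmono : (L ^ (2 ^ (n + 1) : ℕ)) ^ (e n)
        ≤ ((F 0 ^ (2 ^ (n + 1) - 1 : ℕ) * K) * p (c ^ (2 ^ n)) ^ 2) ^ (e n) :=
      Real.rpow_le_rpow (pow_nonneg hL0 _) (main n) (he0 n).le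
    refine hmono.trans_eq ?_
    rw [Real.mul_rpow (mul_nonneg (pow_nonneg (hF0 0) _) hK0.le) (sq_nonneg _)]
    congr 1
    rw [hudef]
    simp only
    rw [heexp n, ← hcdef]
    rw [← Real.rpow_natCast (p (c ^ 2 ^ n)) 2, ← Real.rpow_mul (hpnn _)]
    norm_num
  -- the coefficient tends to F 0
  have hetend : Tendsto e atTop (nhds 0) := by
    have : e = fun n : ℕ => ((2 : ℝ)⁻¹) ^ (n + 1) := by
      funext n; rw [hedef]; simp [inv_pow]
    rw [this]
    have h2 : Tendsto (fun n : ℕ => ((2 : ℝ)⁻¹) ^ n) atTop (nhds 0) :=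
      tendsto_pow_atTop_nhds_zero_of_lt_one (by norm_num) (by norm_num)
    exact h2.comp (tendsto_add_atTop_nat 1)
  have hcoef : Tendsto (fun n => (F 0 ^ (2 ^ (n + 1) - 1 : ℕ) * K) ^ (e n)) atTop (nhds (F 0)) := by
    have hrw : ∀ n, (F 0 ^ (2 ^ (n + 1) - 1 : ℕ) * K) ^ (e n)
        = F 0 ^ (1 - e n) * K ^ (e n) := by
      intro n
      rw [Real.mul_rpow (pow_nonneg (hF0 0) _) hK0.le]
      congr 1
      rw [← Real.rpow_natCast (F 0) (2 ^ (n + 1) - 1), ← Real.rpow_mul (hF0 0)]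
      congr 1
      have h1 : ((2 ^ (n + 1) - 1 : ℕ) : ℝ) = 2 ^ (n + 1) - 1 := by
        push_cast [Nat.one_le_two_pow]; ring
      rw [h1, hedef]
      simp only
      field_simp
    simp only [hrw]
    have hKt : Tendsto (fun n => K ^ (e n)) atTop (nhds 1) := by
      have hc : ContinuousAt (fun x : ℝ => K ^ x) 0 :=
        Real.continuousAt_const_rpow (ne_of_gt hK0)
      have := hc.tendsto.comp hetend
      simpa [Function.comp_def] using this
    have hF0t : Tendsto (fun n => F 0 ^ (1 - e n) : ℕ → ℝ) atTop (nhds (F 0)) := by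
      have h1e : Tendsto (fun n => 1 - e n : ℕ → ℝ) atTop (nhds 1) := by
        have := (tendsto_const_nhds (x := (1:ℝ)) (f := atTop (α := ℕ))).sub hetend
        simpa using this
      by_cases hF : F 0 = 0
      · have : ∀ n, F 0 ^ (1 - e n) = 0 := by
          intro n
          rw [hF]
          apply Real.zero_rpow
          have : e n < 1 := by
            rw [hedef]
            simp only
            rw [inv_lt_one_iff₀]
            right
            exact one_lt_pow₀ (by norm_num) (by omega)
          linarith
        have heq : (fun n : ℕ => F 0 ^ (1 - e n)) = fun _ : ℕ => (0 : ℝ) := funext this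
        rw [heq, hF]
        exact tendsto_const_nhds
      · have hc : ContinuousAt (fun x : ℝ => F 0 ^ x) 1 :=
          Real.continuousAt_const_rpow hF
        have := hc.tendsto.comp h1e
        simpa [Function.comp_def] using this
    have := hF0t.mul hKt
    simpa using this
  -- γa is nonnegative
  have hcobdd : IsCoboundedUnder (· ≥ ·) atTop u := hbdd.isCoboundedUnder_ge
  have hγ0 : 0 ≤ γa := by
    rw [← hγ]
    exact le_liminf_of_le hcobdd (Eventually.of_forall hu0)
  -- for every ε > 0, L ≤ γa * (F 0 + ε)
  have hstep : ∀ ε : ℝ, 0 < ε → L ≤ γa * (F 0 + ε) := by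
    intro ε hε
    have hFε : 0 < F 0 + ε := by have := hF0 0; linarith
    have hev : ∀ᶠ n in atTop, (F 0 ^ (2 ^ (n + 1) - 1 : ℕ) * K) ^ (e n) < F 0 + ε :=
      hcoef.eventually_lt_const (by linarith)
    have hev2 : ∀ᶠ n in atTop, L / (F 0 + ε) ≤ u n := by
      filter_upwards [hev] with n hn
      rw [div_le_iff₀ hFε]
      calc L ≤ (F 0 ^ (2 ^ (n + 1) - 1 : ℕ) * K) ^ (e n) * u n := main' n
        _ ≤ (F 0 + ε) * u n := mul_le_mul_of_nonneg_right hn.le (hu0 n)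
        _ = u n * (F 0 + ε) := mul_comm _ _
    have hle : L / (F 0 + ε) ≤ γa := by
      rw [← hγ]
      exact le_liminf_of_le hcobdd hev2
    calc L = (L / (F 0 + ε)) * (F 0 + ε) := by field_simp
      _ ≤ γa * (F 0 + ε) := mul_le_mul_of_nonneg_right hle hFε.le
  -- conclude
  rw [← hF02]
  have : ∀ ε : ℝ, 0 < ε → L ≤ γa * F 0 + ε := by
    intro ε hε
    have hδ : 0 < ε / (γa + 1) := by positivity
    have h1 := hstep _ hδ
    have h2 : γa * (ε / (γa + 1)) ≤ ε := by
      rw [← mul_div_assoc, div_le_iff₀ (by linarith : (0:ℝ) < γa + 1)]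
      nlinarith
    nlinarith [hstep _ hδ]
  exact le_of_forall_pos_le_add this
end

section
/- Let H be a Hilbert space and D ⊆ H dense. For X, Y ∈ L†(D,H), the weak product X □ Y is well-defined (i.e., Y(D) ⊆ D((X†)*) and X†(D) ⊆ D(Y*)) if and only if there exists Z ∈ L†(D,H) such that ⟨Yξ, X†η⟩ = ⟨Zξ, η⟩ for all ξ, η ∈ D; in that case Z = X □ Y := (X†)* Y restricted to D. -/
local notation "⟪" x ", " y "⟫" => @inner ℂ _ _ x y

/-- For `X, Y ∈ L†(D,H)` (encoded by linear maps `X, Y : D → H` with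
adjoint witnesses `Xd, Yd` on `D`), the weak product `X □ Y` is well-defined
(`Y(D) ⊆ D((X†)*)` and `X†(D) ⊆ D(Y*)`) iff there is `Z ∈ L†(D,H)` with
`⟨Yξ, X†η⟩ = ⟨Zξ, η⟩` for all `ξ, η ∈ D`; moreover such `Z` is unique and equals
`(X†)*Y ↾ D`. -/
theorem stmt_12 {H : Type*} [NormedAddCommGroup H] [InnerProductSpace ℂ H] [CompleteSpace H]
    (D : Submodule ℂ H) (hD : Dense (D : Set H))
    (X Xd Y Yd : ↥D →ₗ[ℂ] H)
    (hX : ∀ ξ η : D, ⟪X ξ, (η : H)⟫ = ⟪(ξ : H), Xd η⟫)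
    (hY : ∀ ξ η : D, ⟪Y ξ, (η : H)⟫ = ⟪(ξ : H), Yd η⟫) :
    (((∀ ξ : D, ∃ v : H, ∀ η : D, ⟪Y ξ, Xd η⟫ = ⟪v, (η : H)⟫) ∧
        (∀ η : D, ∃ w : H, ∀ ξ : D, ⟪Y ξ, Xd η⟫ = ⟪(ξ : H), w⟫)) ↔
      (∃ Z Zd : ↥D →ₗ[ℂ] H, (∀ ξ η : D, ⟪Z ξ, (η : H)⟫ = ⟪(ξ : H), Zd η⟫) ∧
        ∀ ξ η : D, ⟪Y ξ, Xd η⟫ = ⟪Z ξ, (η : H)⟫)) ∧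
    -- in that case `Z ξ` is the value of `(X†)* (Y ξ)`
    (∀ Z : ↥D →ₗ[ℂ] H, (∀ ξ η : D, ⟪Y ξ, Xd η⟫ = ⟪Z ξ, (η : H)⟫) →
      ∀ (ξ : D) (v : H), (∀ η : D, ⟪Y ξ, Xd η⟫ = ⟪v, (η : H)⟫) → Z ξ = v) := by
  have uniqL : ∀ v w : H, (∀ η : D, ⟪v, (η : H)⟫ = ⟪w, (η : H)⟫) → v = w := by
    intro v w h
    exact hD.eq_of_inner_left ℂ fun η hη => h ⟨η, hη⟩
  have uniqR : ∀ v w : H, (∀ ξ : D, ⟪(ξ : H), v⟫ = ⟪(ξ : H), w⟫) → v = w := by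
    intro v w h
    exact hD.eq_of_inner_right ℂ fun ξ hξ => h ⟨ξ, hξ⟩
  constructor
  · constructor
    · rintro ⟨h1, h2⟩
      choose f hf using h1
      choose g hg using h2
      have hfadd : ∀ ξ ξ' : D, f (ξ + ξ') = f ξ + f ξ' := by
        intro ξ ξ'
        apply uniqL
        intro η
        rw [← hf, map_add, inner_add_left, inner_add_left, hf, hf]
      have hfsmul : ∀ (c : ℂ) (ξ : D), f (c • ξ) = c • f ξ := by
        intro c ξ
        apply uniqL
        intro η
        rw [← hf, map_smul, inner_smul_left, inner_smul_left, hf]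
      have hgadd : ∀ η η' : D, g (η + η') = g η + g η' := by
        intro η η'
        apply uniqR
        intro ξ
        rw [← hg, map_add, inner_add_right, inner_add_right, hg, hg]
      have hgsmul : ∀ (c : ℂ) (η : D), g (c • η) = c • g η := by
        intro c η
        apply uniqR
        intro ξ
        rw [← hg, map_smul, inner_smul_right, inner_smul_right, hg]
      refine ⟨⟨⟨f, hfadd⟩, hfsmul⟩, ⟨⟨g, hgadd⟩, hgsmul⟩, ?_, ?_⟩
      · intro ξ η
        exact (hf ξ η).symm.trans (hg η ξ)
      · intro ξ η
        exact hf ξ η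
    · rintro ⟨Z, Zd, hZZd, hZ⟩
      constructor
      · intro ξ
        exact ⟨Z ξ, fun η => hZ ξ η⟩
      · intro η
        exact ⟨Zd η, fun ξ => (hZ ξ η).trans (hZZd ξ η)⟩
  · intro Z hZ ξ v hv
    apply uniqL
    intro η
    rw [← hZ ξ η, hv η]
end

section
/- Let H be a Hilbert space, D ⊆ H dense, and X, Y ∈ L†(D,H). Suppose there exists a net {B_α} of bounded operators in L†(D,H) mapping D into D such that B_α ξ → Yξ for every ξ ∈ D, and there exists Z ∈ L†(D,H) such that ⟨B_α ξ, X†η⟩ → ⟨Zξ, η⟩ for all ξ, η ∈ D. Then X □ Y is well-defined and X □ Y = Z. -/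
open Filter

local notation "⟪" x ", " y "⟫" => @inner ℂ _ _ x y

/-- If a net `{B_α}` of bounded operators mapping `D` into `D` converges
strongly to `Y` and `⟨B_α ξ, X†η⟩ → ⟨Zξ, η⟩` for some `Z ∈ L†(D,H)`, then `X □ Y` is
well-defined and `X □ Y = Z`, i.e. `⟨Yξ, X†η⟩ = ⟨Zξ, η⟩` for all `ξ, η ∈ D`. -/
theorem stmt_14 {H : Type*} [NormedAddCommGroup H] [InnerProductSpace ℂ H] [CompleteSpace H]
    {ι : Type*} [Nonempty ι] [SemilatticeSup ι]
    (D : Submodule ℂ H) (hD : Dense (D : Set H))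
    (X Xd Y Yd Z Zd : ↥D →ₗ[ℂ] H)
    (hX : ∀ ξ η : D, ⟪X ξ, (η : H)⟫ = ⟪(ξ : H), Xd η⟫)
    (hY : ∀ ξ η : D, ⟪Y ξ, (η : H)⟫ = ⟪(ξ : H), Yd η⟫)
    (hZ : ∀ ξ η : D, ⟪Z ξ, (η : H)⟫ = ⟪(ξ : H), Zd η⟫)
    (B : ι → (↥D →ₗ[ℂ] H))
    (hBbdd : ∀ i : ι, ∃ C : ℝ, ∀ ξ : D, ‖B i ξ‖ ≤ C * ‖(ξ : H)‖)
    (hBD : ∀ (i : ι) (ξ : D), B i ξ ∈ D)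
    (hconv : ∀ ξ : D, Tendsto (fun i => B i ξ) atTop (nhds (Y ξ)))
    (hweak : ∀ ξ η : D, Tendsto (fun i => ⟪B i ξ, Xd η⟫) atTop (nhds ⟪Z ξ, (η : H)⟫)) :
    ∀ ξ η : D, ⟪Y ξ, Xd η⟫ = ⟪Z ξ, (η : H)⟫ := by
  intro ξ η
  have h1 : Tendsto (fun i => ⟪B i ξ, Xd η⟫) atTop (nhds ⟪Y ξ, Xd η⟫) :=
    (Continuous.tendsto continuous_inner _).comp ((hconv ξ).prodMk_nhds tendsto_const_nhds)
  exact tendsto_nhds_unique h1 (hweak ξ η)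
end

section
/- Let A be a unital Banach *-algebra (or more generally a unital normed *-algebra whose bounded part is a C*-algebra with norm q) and x an element such that the resolvent map λ ↦ (x − λe)⁻¹ exists in D(q) and is q-analytic for |λ| > r, with q-convergent Laurent expansion (x − λe)⁻¹ = Σ_{k≥1} a_k λ^{−k}. Then the Laurent coefficients satisfy x a_k = a_{k+1} for all k ≥ 1 and x a_1 = −x; consequently x = −a_2 ∈ D(q). In particular, an element with finite spectral radius relative to D(q) belongs to D(q). -/
open Finset in
/-- Shift a Laurent-type sum. -/
lemma shift_smul {B : Type*} [AddCommGroup B] [Module ℂ B] [TopologicalSpace B]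
    [IsTopologicalAddGroup B] [ContinuousConstSMul ℂ B]
    {f : ℕ → B} {s : B} {t : ℂ} (ht : t ≠ 0)
    (h : HasSum (fun k : ℕ => (t ^ (k + 1))⁻¹ • f k) s) :
    HasSum (fun k : ℕ => (t ^ (k + 1))⁻¹ • f (k + 1)) (t • s - f 0) := by
  have h1 := (hasSum_nat_add_iff' (f := fun k : ℕ => (t ^ (k + 1))⁻¹ • f k) 1).mpr h
  have h2 := h1.const_smul t
  have e1 : ∀ k : ℕ, t • ((t ^ (k + 1 + 1))⁻¹ • f (k + 1)) = (t ^ (k + 1))⁻¹ • f (k + 1) := by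
    intro k
    rw [smul_smul]
    congr 1
    rw [pow_succ']
    field_simp
  have e2 : t • (s - ∑ i ∈ range 1, (t ^ (i + 1))⁻¹ • f i) = t • s - f 0 := by
    rw [Finset.range_one, Finset.sum_singleton, smul_sub, smul_smul]
    congr 1
    rw [pow_one, mul_inv_cancel₀ ht, one_smul]
  rw [e2] at h2
  exact h2.congr_fun (fun k => (e1 k).symm)

lemma const_eq_zero {B : Type*} [NormedAddCommGroup B] [NormedSpace ℂ B]
    (b : ℕ → B) (c : B) (C R T : ℝ) (hR : 1 ≤ R) (hT : 1 ≤ T)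
    (hb : ∀ k, ‖b k‖ ≤ C * R ^ k)
    (h : ∀ t : ℝ, T ≤ t → HasSum (fun k : ℕ => (((t : ℂ)) ^ (k + 1))⁻¹ • b k) c) :
    c = 0 := by
  have hC : 0 ≤ C := by
    have := hb 0
    simpa using (norm_nonneg (b 0)).trans this
  have key : ∀ ε : ℝ, 0 < ε → ‖c‖ ≤ ε := by
    intro ε hε
    set t : ℝ := max (max T (2 * R)) (2 * C / ε) with htdef
    have ht1 : T ≤ t := le_max_of_le_left (le_max_left _ _)
    have ht2 : 2 * R ≤ t := le_max_of_le_left (le_max_right _ _)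
    have ht3 : 2 * C / ε ≤ t := le_max_right _ _
    have htpos : 0 < t := lt_of_lt_of_le (by linarith) ht1
    have hnorm : ∀ k : ℕ, ‖(((t : ℂ)) ^ (k + 1))⁻¹ • b k‖ ≤ (C / t) * (1 / 2) ^ k := by
      intro k
      rw [norm_smul, norm_inv, norm_pow, Complex.norm_real, Real.norm_eq_abs,
        abs_of_pos htpos]
      have h1 : (t ^ (k + 1))⁻¹ * ‖b k‖ ≤ (t ^ (k + 1))⁻¹ * (C * R ^ k) := by
        apply mul_le_mul_of_nonneg_left (hb k) (by positivity)
      refine h1.trans ?_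
      rw [pow_succ']
      have hRt : R / t ≤ 1 / 2 := by
        rw [div_le_div_iff₀ htpos (by norm_num)]
        linarith
      have hRtnn : (0:ℝ) ≤ R / t := by positivity
      calc (t * t ^ k)⁻¹ * (C * R ^ k) = (C / t) * (R / t) ^ k := by
            rw [mul_inv, div_pow]
            field_simp
        _ ≤ (C / t) * (1 / 2) ^ k := by
            apply mul_le_mul_of_nonneg_left (pow_le_pow_left₀ hRtnn hRt k) (by positivity)
    have hgeo : Summable (fun k : ℕ => (C / t) * (1 / 2 : ℝ) ^ k) :=
      (summable_geometric_of_lt_one (by norm_num) (by norm_num)).mul_left _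
    have hsn : Summable (fun k : ℕ => ‖(((t : ℂ)) ^ (k + 1))⁻¹ • b k‖) :=
      Summable.of_nonneg_of_le (fun k => norm_nonneg _) hnorm hgeo
    have hc : ‖c‖ ≤ (C / t) * 2 := by
      have e1 : c = ∑' k : ℕ, (((t : ℂ)) ^ (k + 1))⁻¹ • b k := ((h t ht1).tsum_eq).symm
      rw [e1]
      refine (norm_tsum_le_tsum_norm hsn).trans ?_
      have := Summable.tsum_le_tsum hnorm hsn hgeo
      refine this.trans ?_
      rw [tsum_mul_left, tsum_geometric_of_lt_one (by norm_num) (by norm_num)]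
      norm_num
    refine hc.trans ?_
    rw [div_mul_eq_mul_div, div_le_iff₀ htpos]
    have : 2 * C ≤ ε * t := by
      have := (div_le_iff₀ hε).mp (le_trans (le_refl _) ht3)
      calc 2 * C = (2 * C / ε) * ε := by field_simp
        _ ≤ t * ε := mul_le_mul_of_nonneg_right ht3 hε.le
        _ = ε * t := mul_comm _ _
    linarith
  by_contra hc
  have hpos : 0 < ‖c‖ := norm_pos_iff.mpr hc
  have := key (‖c‖ / 2) (by linarith)
  linarith

lemma shifted_hasSum {B : Type*} [NormedAddCommGroup B] [NormedSpace ℂ B]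
    (b : ℕ → B) (C R T : ℝ) (hR : 1 ≤ R) (hT : 1 ≤ T)
    (hb : ∀ k, ‖b k‖ ≤ C * R ^ k)
    (h : ∀ t : ℝ, T ≤ t → HasSum (fun k : ℕ => (((t : ℂ)) ^ (k + 1))⁻¹ • b k) 0) :
    (∀ k, ‖b (k + 1)‖ ≤ (C * R) * R ^ k) ∧
    (∀ t : ℝ, T ≤ t → HasSum (fun k : ℕ => (((t : ℂ)) ^ (k + 1))⁻¹ • b (k + 1)) (-(b 0))) := by
  constructor
  · intro k
    have := hb (k + 1)
    calc ‖b (k + 1)‖ ≤ C * R ^ (k + 1) := this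
      _ = (C * R) * R ^ k := by ring
  · intro t ht
    have htpos : (0:ℝ) < t := lt_of_lt_of_le (by linarith) ht
    have htne : (t : ℂ) ≠ 0 := by
      simp only [ne_eq, Complex.ofReal_eq_zero]
      exact ne_of_gt htpos
    have := shift_smul htne (h t ht)
    simpa using this

lemma coeff_eq_zero {B : Type*} [NormedAddCommGroup B] [NormedSpace ℂ B] [CompleteSpace B]
    (R T : ℝ) (hR : 1 ≤ R) (hT : 1 ≤ T) :
    ∀ (k : ℕ) (b : ℕ → B) (c : B) (C : ℝ),
      (∀ k, ‖b k‖ ≤ C * R ^ k) →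
      (∀ t : ℝ, T ≤ t → HasSum (fun k : ℕ => (((t : ℂ)) ^ (k + 1))⁻¹ • b k) c) →
      b k = 0 := by
  intro k
  induction k with
  | zero =>
    intro b c C hb h
    have hc := const_eq_zero b c C R T hR hT hb h
    subst hc
    obtain ⟨hb', h'⟩ := shifted_hasSum b C R T hR hT hb h
    have := const_eq_zero (fun k => b (k + 1)) (-(b 0)) (C * R) R T hR hT hb' h'
    simpa using this
  | succ k ih =>
    intro b c C hb h
    have hc := const_eq_zero b c C R T hR hT hb h
    subst hc
    obtain ⟨hb', h'⟩ := shifted_hasSum b C R T hR hT hb h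
    exact ih (fun n => b (n + 1)) (-(b 0)) (C * R) hb' h'


/-- Let `A` be a unital normed *-algebra whose bounded part `D(q)` is a
C*-algebra `B` (embedded by `ι : B → A`). If for `|λ| > r` the resolvent `(x - λe)⁻¹`
exists in `D(q)` with `q`-convergent Laurent expansion `(x - λe)⁻¹ = Σ_{k≥1} a_k λ^{-k}`,
then `x a_k = a_{k+1}`, `x a_1 = -x`, and consequently `x = -a_2 ∈ D(q)`.
(Here `a k` denotes the paper's `a_{k+1}`.) -/
theorem stmt_17 {A : Type*} [NormedRing A] [NormedAlgebra ℂ A] [StarRing A]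
    {B : Type*} [NormedRing B] [NormedAlgebra ℂ B] [CompleteSpace B]
    [StarRing B] [CStarRing B]
    (ι : B →ₐ[ℂ] A) (hι : Function.Injective ι)
    (x : A) (r : ℝ) (res : ℂ → B) (a : ℕ → B)
    (hres : ∀ lam : ℂ, r < ‖lam‖ →
      (x - algebraMap ℂ A lam) * ι (res lam) = 1 ∧
      ι (res lam) * (x - algebraMap ℂ A lam) = 1)
    (hLaurent : ∀ lam : ℂ, r < ‖lam‖ →
      HasSum (fun k : ℕ => (lam ^ (k + 1))⁻¹ • a k) (res lam)) :
    (∀ k : ℕ, x * ι (a k) = ι (a (k + 1))) ∧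
    x * ι (a 0) = -x ∧
    x = -ι (a 1) ∧
    x ∈ Set.range ι := by
  -- setup
  set t0 : ℝ := max r 0 + 1 with ht0def
  have ht0r : r < t0 := by
    have := le_max_left r 0
    simp only [ht0def]; linarith
  have ht01 : (1:ℝ) ≤ t0 := by
    have := le_max_right r 0
    simp only [ht0def]; linarith
  have ht0pos : (0:ℝ) < t0 := by linarith
  set μc : ℂ := ((t0 : ℝ) : ℂ) with hμcdef
  have hnormμ : ‖μc‖ = t0 := by
    rw [hμcdef, Complex.norm_real, Real.norm_eq_abs, abs_of_pos ht0pos]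
  have hμ : r < ‖μc‖ := by rw [hnormμ]; exact ht0r
  -- geometric bound on the coefficients
  have hsum0 := hLaurent μc hμ
  obtain ⟨M, hM⟩ : ∃ M : ℝ, ∀ k : ℕ, ‖(μc ^ (k + 1))⁻¹ • a k‖ ≤ M := by
    have htend := (hsum0.summable.tendsto_atTop_zero).norm
    obtain ⟨M, hM⟩ := htend.bddAbove_range
    exact ⟨M, fun k => hM ⟨k, rfl⟩⟩
  set C : ℝ := M * t0 with hCdef
  have ha : ∀ k, ‖a k‖ ≤ C * t0 ^ k := by
    intro k
    have h1 := hM k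
    have e : ‖a k‖ = t0 ^ (k + 1) * ‖(μc ^ (k + 1))⁻¹ • a k‖ := by
      rw [norm_smul, norm_inv, norm_pow, hnormμ]
      field_simp
    rw [e]
    calc t0 ^ (k + 1) * ‖(μc ^ (k + 1))⁻¹ • a k‖ ≤ t0 ^ (k + 1) * M :=
          mul_le_mul_of_nonneg_left h1 (by positivity)
      _ = C * t0 ^ k := by rw [pow_succ, hCdef]; ring
  -- resolvent identity in B
  have hresid : ∀ lam lam' : ℂ, r < ‖lam‖ → r < ‖lam'‖ →
      res lam - res lam' = (lam - lam') • (res lam * res lam') := by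
    intro lam lam' h1 h2
    apply hι
    rw [map_sub, map_smul, map_mul]
    have e1 := hres lam h1
    have e2 := hres lam' h2
    calc ι (res lam) - ι (res lam')
        = ι (res lam) * ((x - algebraMap ℂ A lam') * ι (res lam')) -
            (ι (res lam) * (x - algebraMap ℂ A lam)) * ι (res lam') := by
          rw [e2.1, e1.2, mul_one, one_mul]
      _ = ι (res lam) * (((x - algebraMap ℂ A lam') - (x - algebraMap ℂ A lam)) * ι (res lam')) := by
          noncomm_ring
      _ = ι (res lam) * ((algebraMap ℂ A (lam - lam')) * ι (res lam')) := by
          rw [map_sub]; noncomm_ring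
      _ = ι (res lam) * ((lam - lam') • ι (res lam')) := by rw [Algebra.smul_def]
      _ = (lam - lam') • (ι (res lam) * ι (res lam')) := by rw [mul_smul_comm]
  -- the key Laurent-coefficient identity family
  set b : ℕ → B := fun k => res μc * a (k + 1) - μc • (res μc * a k) - a k with hbdef
  set cc : B := -(res μc + res μc * a 0) with hccdef
  have hmain : ∀ t : ℝ, t0 ≤ t → HasSum (fun k : ℕ => (((t : ℂ)) ^ (k + 1))⁻¹ • b k) cc := by
    intro t ht
    have htpos : (0:ℝ) < t := lt_of_lt_of_le ht0pos ht
    have hnt : r < ‖((t:ℝ):ℂ)‖ := by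
      rw [Complex.norm_real, Real.norm_eq_abs, abs_of_pos htpos]; linarith
    have htne : ((t:ℝ):ℂ) ≠ 0 := by
      simp only [ne_eq, Complex.ofReal_eq_zero]; exact ne_of_gt htpos
    have h0 := hLaurent ((t:ℝ):ℂ) hnt
    have h1 : HasSum (fun k : ℕ => (((t:ℝ):ℂ) ^ (k + 1))⁻¹ • (res μc * a k))
        (res μc * res ((t:ℝ):ℂ)) := by
      have := h0.mul_left (res μc)
      simpa [mul_smul_comm] using this
    have h2 := shift_smul htne h1
    have h3 : HasSum (fun k : ℕ => (((t:ℝ):ℂ) ^ (k + 1))⁻¹ • (μc • (res μc * a k)))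
        (μc • (res μc * res ((t:ℝ):ℂ))) := by
      exact (h1.const_smul μc).congr_fun (fun k => smul_comm _ _ _)
    have h4 := (h2.sub h3).sub h0
    have hterm : ∀ k : ℕ,
        ((((t:ℝ):ℂ) ^ (k + 1))⁻¹ • (res μc * a (k + 1)) -
          (((t:ℝ):ℂ) ^ (k + 1))⁻¹ • (μc • (res μc * a k))) -
          (((t:ℝ):ℂ) ^ (k + 1))⁻¹ • a k = (((t:ℝ):ℂ) ^ (k + 1))⁻¹ • b k := by
      intro k
      rw [hbdef]
      dsimp only
      rw [smul_sub, smul_sub]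
    have hval : (((t:ℝ):ℂ) • (res μc * res ((t:ℝ):ℂ)) - res μc * a 0 -
        μc • (res μc * res ((t:ℝ):ℂ))) - res ((t:ℝ):ℂ) = cc := by
      have hid := hresid μc ((t:ℝ):ℂ) hμ hnt
      have e : (((t:ℝ):ℂ) - μc) • (res μc * res ((t:ℝ):ℂ)) = res ((t:ℝ):ℂ) - res μc := by
        rw [show ((t:ℝ):ℂ) - μc = -(μc - ((t:ℝ):ℂ)) by ring, neg_smul, ← hid, neg_sub]
      have e2 : ((t:ℝ):ℂ) • (res μc * res ((t:ℝ):ℂ)) - μc • (res μc * res ((t:ℝ):ℂ)) =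
          res ((t:ℝ):ℂ) - res μc := by rw [← sub_smul]; exact e
      rw [hccdef]
      rw [show (((t:ℝ):ℂ) • (res μc * res ((t:ℝ):ℂ)) - res μc * a 0 -
            μc • (res μc * res ((t:ℝ):ℂ))) - res ((t:ℝ):ℂ)
          = (((t:ℝ):ℂ) • (res μc * res ((t:ℝ):ℂ)) - μc • (res μc * res ((t:ℝ):ℂ)))
            - res μc * a 0 - res ((t:ℝ):ℂ) by abel, e2]
      abel
    rw [hval] at h4
    exact h4.congr_fun (fun k => (hterm k).symm)
  -- coefficient bound for b
  set C2 : ℝ := ‖res μc‖ * C * t0 + t0 * (‖res μc‖ * C) + C with hC2def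
  have hbb : ∀ k, ‖b k‖ ≤ C2 * t0 ^ k := by
    intro k
    have e1 : ‖res μc * a (k + 1)‖ ≤ ‖res μc‖ * (C * t0 ^ (k + 1)) :=
      le_trans (norm_mul_le _ _) (mul_le_mul_of_nonneg_left (ha (k + 1)) (norm_nonneg _))
    have e2 : ‖μc • (res μc * a k)‖ ≤ t0 * (‖res μc‖ * (C * t0 ^ k)) := by
      rw [norm_smul, hnormμ]
      exact mul_le_mul_of_nonneg_left
        (le_trans (norm_mul_le _ _) (mul_le_mul_of_nonneg_left (ha k) (norm_nonneg _)))
        ht0pos.le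
    have e3 := ha k
    calc ‖b k‖ ≤ ‖res μc * a (k + 1)‖ + ‖μc • (res μc * a k)‖ + ‖a k‖ := by
          rw [hbdef]
          exact le_trans (norm_sub_le _ _) (by linarith [norm_sub_le (res μc * a (k+1)) (μc • (res μc * a k))])
      _ ≤ ‖res μc‖ * (C * t0 ^ (k + 1)) + t0 * (‖res μc‖ * (C * t0 ^ k)) + C * t0 ^ k := by
          linarith
      _ = C2 * t0 ^ k := by rw [hC2def, pow_succ]; ring
  have hc0 : cc = 0 := const_eq_zero b cc C2 t0 t0 ht01 ht01 hbb hmain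
  have hbk : ∀ k, b k = 0 := fun k => coeff_eq_zero t0 t0 ht01 ht01 k b cc C2 hbb hmain
  -- a 0 = -1
  have h_ra0 : res μc * a 0 = -res μc := by
    have h := hc0
    rw [hccdef, neg_eq_zero] at h
    exact eq_neg_of_add_eq_zero_right h
  have ha0 : a 0 = -1 := by
    have e1 : res μc * (-(a 0)) = res μc := by rw [mul_neg, h_ra0, neg_neg]
    have e2 : ι (res μc) * ι (-(a 0)) = ι (res μc) := by rw [← map_mul, e1]
    have hiota : ι (-(a 0)) = 1 := by
      calc ι (-(a 0)) = 1 * ι (-(a 0)) := (one_mul _).symm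
        _ = ((x - algebraMap ℂ A μc) * ι (res μc)) * ι (-(a 0)) := by rw [(hres μc hμ).1]
        _ = (x - algebraMap ℂ A μc) * (ι (res μc) * ι (-(a 0))) := by rw [mul_assoc]
        _ = (x - algebraMap ℂ A μc) * ι (res μc) := by rw [e2]
        _ = 1 := (hres μc hμ).1
    have := hι (hiota.trans (map_one ι).symm)
    exact neg_eq_iff_eq_neg.mp this
  -- the star identity
  have hstar : ∀ k, res μc * (a (k + 1) - μc • a k) = a k := by
    intro k
    have h := hbk k
    rw [hbdef] at h
    have h' : res μc * a (k + 1) - μc • (res μc * a k) = a k := by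
      have := sub_eq_zero.mp (by rw [← h])
      exact this
    rw [mul_sub, mul_smul_comm]
    exact h'
  -- goal 1
  have goal1 : ∀ k : ℕ, x * ι (a k) = ι (a (k + 1)) := by
    intro k
    have hck := hstar k
    have e1 : ι (a k) = ι (res μc) * ι (a (k + 1) - μc • a k) := by
      rw [← map_mul, hck]
    rw [e1]
    calc x * (ι (res μc) * ι (a (k + 1) - μc • a k))
        = (x - algebraMap ℂ A μc) * (ι (res μc) * ι (a (k + 1) - μc • a k)) +
            algebraMap ℂ A μc * (ι (res μc) * ι (a (k + 1) - μc • a k)) := by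
          rw [sub_mul]; abel
      _ = ((x - algebraMap ℂ A μc) * ι (res μc)) * ι (a (k + 1) - μc • a k) +
            μc • (ι (res μc) * ι (a (k + 1) - μc • a k)) := by
          congr 1
          · rw [mul_assoc]
          · exact (Algebra.smul_def _ _).symm
      _ = ι (a (k + 1) - μc • a k) + μc • ι (res μc * (a (k + 1) - μc • a k)) := by
          rw [(hres μc hμ).1, one_mul, map_mul]
      _ = ι (a (k + 1) - μc • a k) + μc • ι (a k) := by rw [hck]
      _ = ι ((a (k + 1) - μc • a k) + μc • a k) := by rw [map_add, map_smul]
      _ = ι (a (k + 1)) := by congr 1; abel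
  -- goal 3
  have h1' : res μc * (a 1 - μc • a 0) = a 0 := hstar 0
  have h2' : res μc * (μc • a 0 - a 1) = 1 := by
    rw [show μc • a 0 - a 1 = -(a 1 - μc • a 0) by abel, mul_neg, h1', ha0, neg_neg]
  have h3' : ι (res μc) * ι (μc • a 0 - a 1) = 1 := by rw [← map_mul, h2', map_one]
  have h4' : x - algebraMap ℂ A μc = ι (μc • a 0 - a 1) := by
    calc x - algebraMap ℂ A μc
        = (x - algebraMap ℂ A μc) * (ι (res μc) * ι (μc • a 0 - a 1)) := by rw [h3', mul_one]
      _ = ((x - algebraMap ℂ A μc) * ι (res μc)) * ι (μc • a 0 - a 1) := by rw [mul_assoc]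
      _ = ι (μc • a 0 - a 1) := by rw [(hres μc hμ).1, one_mul]
  have goal3 : x = -ι (a 1) := by
    have e : x = ι (μc • a 0 - a 1) + algebraMap ℂ A μc := by rw [← h4']; abel
    rw [e, ← ι.commutes μc, ← map_add, ← map_neg]
    congr 1
    rw [ha0, Algebra.algebraMap_eq_smul_one]
    module
  have goal2 : x * ι (a 0) = -x := by
    rw [ha0]
    simp
  exact ⟨goal1, goal2, goal3, ⟨-(a 1), by rw [map_neg, ← goal3]⟩⟩
end

section
/- Let H be a Hilbert space, D ⊆ H dense, and X₁, X₂ ∈ L†(D,H) with X₁ □ X₂ well-defined. Let B ∈ L†(D,H) be bounded with B(D) ⊆ D and B†(D) ⊆ D. Then X₁ □ (X₂ □ B) is well-defined and (X₁ □ X₂) □ B = X₁ □ (X₂ □ B) (semi-associativity with respect to bounded operators preserving D). -/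
local notation "⟪" x ", " y "⟫" => @inner ℂ _ _ x y

/-- Semi-associativity with respect to bounded operators preserving `D`:
if `X₁ □ X₂` is well-defined (with value `Z ∈ L†(D,H)`) and `B` is bounded with
`B(D) ⊆ D`, `B†(D) ⊆ D`, then `W = X₂ □ B` (given by `ξ ↦ X₂(Bξ)`) belongs to `L†(D,H)`,
`X₁ □ W` is well-defined, and its value is `(X₁ □ X₂) □ B : ξ ↦ Z(Bξ)`. -/
theorem stmt_18 {H : Type*} [NormedAddCommGroup H] [InnerProductSpace ℂ H] [CompleteSpace H]
    (D : Submodule ℂ H) (hD : Dense (D : Set H))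
    (X₁ X₁d X₂ X₂d Z Zd : ↥D →ₗ[ℂ] H)
    (hX₁ : ∀ ξ η : D, ⟪X₁ ξ, (η : H)⟫ = ⟪(ξ : H), X₁d η⟫)
    (hX₂ : ∀ ξ η : D, ⟪X₂ ξ, (η : H)⟫ = ⟪(ξ : H), X₂d η⟫)
    (hZ : ∀ ξ η : D, ⟪Z ξ, (η : H)⟫ = ⟪(ξ : H), Zd η⟫)
    (hX₁X₂ : ∀ ξ η : D, ⟪X₂ ξ, X₁d η⟫ = ⟪Z ξ, (η : H)⟫)  -- Z = X₁ □ X₂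
    (B Bd : ↥D →ₗ[ℂ] H)
    (hBbdd : ∃ C : ℝ, ∀ ξ : D, ‖B ξ‖ ≤ C * ‖(ξ : H)‖)
    (hBD : ∀ ξ : D, B ξ ∈ D)
    (hBdD : ∀ ξ : D, Bd ξ ∈ D)
    (hB : ∀ ξ η : D, ⟪B ξ, (η : H)⟫ = ⟪(ξ : H), Bd η⟫) :
    ∃ W V : ↥D →ₗ[ℂ] H,
      -- `W = X₂ □ B : ξ ↦ X₂(Bξ)`
      (∀ ξ : D, W ξ = X₂ ⟨B ξ, hBD ξ⟩) ∧
      -- `W ∈ L†(D,H)`, with adjoint witness `V = W†`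
      (∀ ξ η : D, ⟪W ξ, (η : H)⟫ = ⟪(ξ : H), V η⟫) ∧
      -- `X₁ □ W` is well-defined: `W(D) ⊆ D((X₁†)*)` with value `ξ ↦ Z(Bξ)` ...
      (∀ ξ η : D, ⟪W ξ, X₁d η⟫ = ⟪Z ⟨B ξ, hBD ξ⟩, (η : H)⟫) ∧
      -- ... and `X₁†(D) ⊆ D(W*)`
      (∀ η : D, ∃ w : H, ∀ ξ : D, ⟪W ξ, X₁d η⟫ = ⟪(ξ : H), w⟫) := by
  obtain ⟨C, hC⟩ := hBbdd
  -- extend B to a continuous linear map on H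
  let Bc : ↥D →L[ℂ] H := B.mkContinuous C hC
  have hdense : DenseRange (D.subtypeL : ↥D →L[ℂ] H) := by
    simpa [DenseRange, Subtype.range_coe] using hD
  have hui : IsUniformInducing (D.subtypeL : ↥D →L[ℂ] H) :=
    (isometry_subtype_coe).isUniformInducing
  let Bbar : H →L[ℂ] H := Bc.extend D.subtypeL
  have hBbar : ∀ ξ : D, Bbar (ξ : H) = B ξ := fun ξ =>
    ContinuousLinearMap.extend_eq (f := Bc) (e := D.subtypeL) hdense hui ξ
  have key : ∀ (ξ : D) (y : H), ⟪B ξ, y⟫ = ⟪(ξ : H), (ContinuousLinearMap.adjoint Bbar) y⟫ := by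
    intro ξ y
    rw [← hBbar ξ, ContinuousLinearMap.adjoint_inner_right]
  let BtoD : ↥D →ₗ[ℂ] ↥D := B.codRestrict D hBD
  refine ⟨X₂ ∘ₗ BtoD, ((ContinuousLinearMap.adjoint Bbar).toLinearMap) ∘ₗ X₂d,
    fun ξ => rfl, ?_, ?_, ?_⟩
  · intro ξ η
    calc ⟪X₂ (BtoD ξ), (η : H)⟫ = ⟪(BtoD ξ : H), X₂d η⟫ := hX₂ _ _
      _ = ⟪(ξ : H), (ContinuousLinearMap.adjoint Bbar) (X₂d η)⟫ := key ξ _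
  · intro ξ η
    exact hX₁X₂ (BtoD ξ) η
  · intro η
    refine ⟨(ContinuousLinearMap.adjoint Bbar) (Zd η), fun ξ => ?_⟩
    calc ⟪X₂ (BtoD ξ), X₁d η⟫ = ⟪Z (BtoD ξ), (η : H)⟫ := hX₁X₂ _ _
      _ = ⟪(BtoD ξ : H), Zd η⟫ := hZ _ _
      _ = ⟪(ξ : H), (ContinuousLinearMap.adjoint Bbar) (Zd η)⟫ := key ξ _
end
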